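/- arXiv:2002.10700 — 3 statements merged into one kernel-verified Lean document; each statement's English description precedes it below -/
import Mathlib

section
/- Let 𝒜 be an abelian category and let C be a chain complex in 𝒜 which in four consecutive degrees has the form ⋯ → U →(a,b)ᵗ→ V ⊕ W →[[c,d],[e,f]]→ X ⊕ Y →(g,h)→ Z → ⋯ (with arbitrary entries and differentials elsewhere), and suppose the component d : W → X is an isomorphism with inverse d′ : X → W. Then the sequence ⋯ → U →a→ V →(e − f∘d′∘c)→ Y →h→ Z → ⋯ (agreeing with C in all other degrees) is again a chain complex, and the degreewise map from C to this new complex given by the identity in all other degrees, by (1, 0) : V ⊕ W → V, and by (−f∘d′, 1) : X ⊕ Y → Y, is a chain map and a quasi-isomorphism. -/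
open CategoryTheory Category Limits

namespace ElimAux

variable {𝒜 : Type*} [Category 𝒜] [Abelian 𝒜]
  (C : ChainComplex 𝒜 ℤ) (DX : ℤ → 𝒜)
  (r : ∀ k, C.X k ⟶ DX k) (s : ∀ k, DX k ⟶ C.X k)

/-- The new complex, with differential `s ≫ d ≫ r`. -/
def Dcx (keyB : ∀ i j, s i ≫ C.d i j ≫ r j ≫ s j = s i ≫ C.d i j) :
    ChainComplex 𝒜 ℤ where
  X := DX
  d i j := if j + 1 = i then s i ≫ C.d i j ≫ r j else 0
  shape i j h := if_neg (by simpa using h)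
  d_comp_d' i j k hij hjk := by
    simp only [ComplexShape.down_Rel] at hij hjk
    rw [if_pos hij, if_pos hjk]
    simp only [assoc]
    rw [reassoc_of% (keyB i j), HomologicalComplex.d_comp_d_assoc, zero_comp, comp_zero]

lemma Dcx_d (keyB) {i j : ℤ} (h : j + 1 = i) :
    (Dcx C DX r s keyB).d i j = s i ≫ C.d i j ≫ r j := if_pos h

def φAux (keyA : ∀ i j, r i ≫ s i ≫ C.d i j ≫ r j = C.d i j ≫ r j)
    (keyB : ∀ i j, s i ≫ C.d i j ≫ r j ≫ s j = s i ≫ C.d i j) :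
    C ⟶ Dcx C DX r s keyB where
  f := r
  comm' i j hij := by
    simp only [ComplexShape.down_Rel] at hij
    rw [Dcx_d C DX r s keyB hij]
    exact keyA i j

def ψAux (keyB : ∀ i j, s i ≫ C.d i j ≫ r j ≫ s j = s i ≫ C.d i j) :
    Dcx C DX r s keyB ⟶ C where
  f := s
  comm' i j hij := by
    simp only [ComplexShape.down_Rel] at hij
    rw [Dcx_d C DX r s keyB hij]
    show s i ≫ C.d i j = (s i ≫ C.d i j ≫ r j) ≫ s j
    rw [assoc, assoc]; exact (keyB i j).symm

def equivAux (keyA : ∀ i j, r i ≫ s i ≫ C.d i j ≫ r j = C.d i j ≫ r j)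
    (keyB : ∀ i j, s i ≫ C.d i j ≫ r j ≫ s j = s i ≫ C.d i j)
    (hsr : ∀ k, s k ≫ r k = 𝟙 (DX k))
    (H : ∀ i j, C.X i ⟶ C.X j)
    (hz : ∀ i j, ¬ (ComplexShape.down ℤ).Rel j i → H i j = 0)
    (hc : ∀ i, r i ≫ s i = dNext i H + prevD i H + 𝟙 (C.X i)) :
    HomotopyEquiv C (Dcx C DX r s keyB) where
  hom := φAux C DX r s keyA keyB
  inv := ψAux C DX r s keyB
  homotopyHomInvId := ⟨H, hz, fun i => hc i⟩
  homotopyInvHomId := Homotopy.ofEq (by ext k; exact hsr k)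

lemma quasiAux (keyA : ∀ i j, r i ≫ s i ≫ C.d i j ≫ r j = C.d i j ≫ r j)
    (keyB : ∀ i j, s i ≫ C.d i j ≫ r j ≫ s j = s i ≫ C.d i j)
    (hsr : ∀ k, s k ≫ r k = 𝟙 (DX k))
    (H : ∀ i j, C.X i ⟶ C.X j)
    (hz : ∀ i j, ¬ (ComplexShape.down ℤ).Rel j i → H i j = 0)
    (hc : ∀ i, r i ≫ s i = dNext i H + prevD i H + 𝟙 (C.X i)) :
    QuasiIso (φAux C DX r s keyA keyB) :=
  inferInstanceAs (QuasiIso (equivAux C DX r s keyA keyB hsr H hz hc).hom)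

end ElimAux


/-- **Elimination of trivial summands.**
Let `C` be a chain complex (indexed by `ℤ`) in an abelian category `𝒜` which in four
consecutive degrees has the form
`⋯ → U →(a,b)ᵗ→ V ⊕ W →[[c,d],[e,f]]→ X ⊕ Y →(g,h)→ Z → ⋯`,
and suppose the component `d : W → X` is an isomorphism (with inverse `d'`).
Then there is a chain complex `D` agreeing with `C` in all other degrees, having
`V` in degree `n+2` and `Y` in degree `n+1`, whose middle differential is
`e − f ∘ d' ∘ c : V → Y`, together with a chain map `φ : C ⟶ D` which is the
identity in all other degrees, `(1, 0) : V ⊕ W → V` in degree `n+2` and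
`(−f ∘ d', 1) : X ⊕ Y → Y` in degree `n+1`; and `φ` is a quasi-isomorphism. -/
theorem elimination_of_trivial_summands
    {𝒜 : Type*} [Category 𝒜] [Abelian 𝒜]
    (C : ChainComplex 𝒜 ℤ) (n : ℤ) (V W X Y : 𝒜)
    (e₂ : C.X (n + 2) ≅ V ⊞ W) (e₁ : C.X (n + 1) ≅ X ⊞ Y)
    -- the components of the middle differential `V ⊕ W → X ⊕ Y`:
    (c : V ⟶ X) (d : W ⟶ X) (e : V ⟶ Y) (f : W ⟶ Y)
    (hdiff : e₂.inv ≫ C.d (n + 2) (n + 1) ≫ e₁.hom =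
      biprod.desc (biprod.lift c e) (biprod.lift d f))
    -- `d` is an isomorphism, with inverse `d'`:
    (d' : X ⟶ W) (hd : d ≫ d' = 𝟙 W) (hd' : d' ≫ d = 𝟙 X) :
    ∃ (D : ChainComplex 𝒜 ℤ) (φ : C ⟶ D)
      (g₂ : D.X (n + 2) ≅ V) (g₁ : D.X (n + 1) ≅ Y)
      (g : ∀ k : ℤ, k ≠ n + 1 → k ≠ n + 2 → (D.X k ≅ C.X k)),
      -- `φ` is the identity in all other degrees ...
      (∀ (k : ℤ) (h₁ : k ≠ n + 1) (h₂ : k ≠ n + 2), φ.f k = (g k h₁ h₂).inv) ∧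
      -- ... is `(1, 0) : V ⊕ W → V` in degree `n + 2` ...
      φ.f (n + 2) = e₂.hom ≫ biprod.fst ≫ g₂.inv ∧
      -- ... and is `(−f∘d', 1) : X ⊕ Y → Y` in degree `n + 1`:
      φ.f (n + 1) = e₁.hom ≫ biprod.desc (-(d' ≫ f)) (𝟙 Y) ≫ g₁.inv ∧
      -- the middle differential of `D` is `e − f ∘ d' ∘ c : V → Y`:
      g₂.inv ≫ D.d (n + 2) (n + 1) ≫ g₁.hom = e - c ≫ d' ≫ f ∧
      -- `φ` is a quasi-isomorphism:
      QuasiIso φ := by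
  classical
  have hdW : ∀ {Z : 𝒜} (u : W ⟶ Z), d ≫ d' ≫ u = u := fun u => by
    rw [← assoc, hd, id_comp]
  have hdX : ∀ {Z : 𝒜} (u : X ⟶ Z), d' ≫ d ≫ u = u := fun u => by
    rw [← assoc, hd', id_comp]
  have hM : C.d (n+2) (n+1)
      = e₂.hom ≫ biprod.desc (biprod.lift c e) (biprod.lift d f) ≫ e₁.inv := by
    rw [← hdiff]; simp
  have hshape : ∀ i j : ℤ, j + 1 ≠ i → C.d i j = 0 := fun i j h =>
    C.shape i j (by simpa using h)
  obtain ⟨DX, r, s, gV, gY, gC, hro, hr2, hr1, hso, hs2, hs1⟩ :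
    ∃ (DX : ℤ → 𝒜) (r : ∀ k, C.X k ⟶ DX k) (s : ∀ k, DX k ⟶ C.X k)
      (gV : DX (n+2) ≅ V) (gY : DX (n+1) ≅ Y)
      (gC : ∀ k, k ≠ n+1 → k ≠ n+2 → (DX k ≅ C.X k)),
      (∀ (k : ℤ) (h1 : k ≠ n+1) (h2 : k ≠ n+2), r k = (gC k h1 h2).inv) ∧
      r (n+2) = e₂.hom ≫ biprod.fst ≫ gV.inv ∧
      r (n+1) = e₁.hom ≫ biprod.desc (-(d' ≫ f)) (𝟙 Y) ≫ gY.inv ∧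
      (∀ (k : ℤ) (h1 : k ≠ n+1) (h2 : k ≠ n+2), s k = (gC k h1 h2).hom) ∧
      s (n+2) = gV.hom ≫ biprod.lift (𝟙 V) (-(c ≫ d')) ≫ e₂.inv ∧
      s (n+1) = gY.hom ≫ biprod.inr ≫ e₁.inv := by
    refine ⟨fun k => if k = n+2 then V else if k = n+1 then Y else C.X k,
      fun k => if h2 : k = n+2 then
          eqToHom (by rw [h2]) ≫ e₂.hom ≫ biprod.fst ≫
            eqToHom (by subst h2; simp)
        else if h1 : k = n+1 then
          eqToHom (by rw [h1]) ≫ e₁.hom ≫ biprod.desc (-(d' ≫ f)) (𝟙 Y) ≫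
            eqToHom (by subst h1; simp only []; rw [if_neg (by omega)]; simp)
        else eqToHom (by simp only []; rw [if_neg h2, if_neg h1]),
      fun k => if h2 : k = n+2 then
          eqToHom (by subst h2; simp) ≫ biprod.lift (𝟙 V) (-(c ≫ d')) ≫ e₂.inv ≫
            eqToHom (by rw [h2])
        else if h1 : k = n+1 then
          eqToHom (by subst h1; simp only []; rw [if_neg (by omega)]; simp) ≫ biprod.inr ≫ e₁.inv ≫
            eqToHom (by rw [h1])
        else eqToHom (by simp only []; rw [if_neg h2, if_neg h1]),
      eqToIso (by simp), eqToIso (by simp only []; rw [if_neg (by omega)]; simp),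
      fun k h1 h2 => eqToIso (by simp only []; rw [if_neg h2, if_neg h1]),
      ?_, ?_, ?_, ?_, ?_, ?_⟩
    · intro k h1 h2
      simp [dif_neg h2, dif_neg h1, h1, h2]
    · simp
    · simp [show ¬ (n+1 : ℤ) = n + 2 by omega]
    · intro k h1 h2
      simp [dif_neg h2, dif_neg h1, h1, h2]
    · simp
    · simp [show ¬ (n+1 : ℤ) = n + 2 by omega]
  -- the error terms
  have hsr : ∀ k, s k ≫ r k = 𝟙 (DX k) := by
    intro k
    by_cases h2 : k = n + 2
    · subst h2; rw [hr2, hs2]; simp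
    by_cases h1 : k = n + 1
    · subst h1; rw [hr1, hs1]; simp
    · rw [hro k h1 h2, hso k h1 h2]; simp
  have keyA : ∀ i j, r i ≫ s i ≫ C.d i j ≫ r j = C.d i j ≫ r j := by
    intro i j
    by_cases hi2 : i = n + 2
    · subst hi2
      by_cases hj : j = n + 1
      · subst hj
        rw [hr2, hs2, hr1, hM]
        simp only [assoc, Iso.inv_hom_id_assoc]
        have hcoreA : biprod.fst ≫ biprod.lift (𝟙 V) (-(c ≫ d')) ≫
            biprod.desc (biprod.lift c e) (biprod.lift d f) ≫
              biprod.desc (-(d' ≫ f)) (𝟙 Y) =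
            biprod.desc (biprod.lift c e) (biprod.lift d f) ≫
              biprod.desc (-(d' ≫ f)) (𝟙 Y) := by
          ext <;> simp [biprod.lift_desc, hdW, hdX, hd, hd'] <;> abel
        rw [reassoc_of% hcoreA]
      · rw [hshape (n+2) j (by omega)]; simp
    by_cases hi1 : i = n + 1
    · subst hi1
      rw [hr1, hs1]
      simp only [assoc, Iso.inv_hom_id_assoc]
      have hBδ : biprod.desc (biprod.lift c e) (biprod.lift d f) ≫
          e₁.inv ≫ C.d (n+1) j = 0 := by
        have h0 := C.d_comp_d (n+2) (n+1) j
        rw [hM] at h0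
        rw [← cancel_epi e₂.hom]
        simpa using h0
      have h1 : biprod.lift d f ≫ e₁.inv ≫ C.d (n+1) j = 0 := by
        have h2 := congrArg (fun t => biprod.inr ≫ t) hBδ
        simpa using h2
      have hlift : d' ≫ biprod.lift d f = biprod.lift (𝟙 X) (d' ≫ f) := by
        ext <;> simp [hd']
      have h2 : biprod.lift (𝟙 X) (d' ≫ f) ≫ e₁.inv ≫ C.d (n+1) j = 0 := by
        rw [← hlift, assoc, h1, comp_zero]
      rw [biprod.lift_eq] at h2
      simp only [Preadditive.add_comp, assoc, id_comp] at h2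
      have hXY' : biprod.inl ≫ e₁.inv ≫ C.d (n+1) j
          = -(d' ≫ f ≫ biprod.inr ≫ e₁.inv ≫ C.d (n+1) j) :=
        eq_neg_of_add_eq_zero_left h2
      conv_rhs => rw [← Iso.hom_inv_id_assoc e₁ (C.d (n+1) j ≫ r j)]
      rw [cancel_epi e₁.hom]
      ext
      · simp [reassoc_of% hXY']
      · simp
    · rw [hro i hi1 hi2, hso i hi1 hi2]; simp
  have keyB : ∀ i j, s i ≫ C.d i j ≫ r j ≫ s j = s i ≫ C.d i j := by
    intro i j
    by_cases hj2 : j = n + 2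
    · subst hj2
      by_cases hi : i = n + 3
      · subst hi
        have hγB : C.d (n+3) (n+2) ≫ e₂.hom ≫
            biprod.desc (biprod.lift c e) (biprod.lift d f) = 0 := by
          have h0 := C.d_comp_d (n+3) (n+2) (n+1)
          rw [hM] at h0
          rw [← cancel_mono e₁.inv]
          simpa using h0
        have hBfst : biprod.desc (biprod.lift c e) (biprod.lift d f) ≫ biprod.fst
            = biprod.desc c d := by
          ext <;> simp
        have hγcd : C.d (n+3) (n+2) ≫ e₂.hom ≫ biprod.desc c d = 0 := by
          have h4 := congrArg (fun t => t ≫ biprod.fst) hγB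
          simpa [hBfst] using h4
        have hfl : biprod.fst ≫ biprod.lift (𝟙 V) (-(c ≫ d'))
            = 𝟙 (V ⊞ W) - biprod.desc c d ≫ d' ≫ biprod.inr := by
          ext <;> simp [hd]
        have core : C.d (n+3) (n+2) ≫ r (n+2) ≫ s (n+2) = C.d (n+3) (n+2) := by
          rw [hr2, hs2]
          simp only [assoc, Iso.inv_hom_id_assoc]
          rw [reassoc_of% hfl]
          simp [Preadditive.sub_comp, Preadditive.comp_sub, reassoc_of% hγcd]
        rw [core]
      · rw [hshape i (n+2) (by omega)]; simp
    by_cases hj1 : j = n + 1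
    · subst hj1
      by_cases hi : i = n + 2
      · subst hi
        rw [hs2, hr1, hs1, hM]
        simp only [assoc, Iso.inv_hom_id_assoc]
        have hcore : biprod.lift (𝟙 V) (-(c ≫ d')) ≫
            biprod.desc (biprod.lift c e) (biprod.lift d f) ≫
              biprod.desc (-(d' ≫ f)) (𝟙 Y) ≫ biprod.inr =
            biprod.lift (𝟙 V) (-(c ≫ d')) ≫
              biprod.desc (biprod.lift c e) (biprod.lift d f) := by
          ext <;> simp [biprod.lift_desc, hdW, hdX, hd, hd'] <;> abel
        rw [reassoc_of% hcore]
      · rw [hshape i (n+1) (by omega)]; simp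
    · rw [hro j hj1 hj2, hso j hj1 hj2]; simp
  -- the homotopy
  obtain ⟨H, hH1, hH0⟩ :
      ∃ H : ∀ i j, C.X i ⟶ C.X j,
        H (n+1) (n+2) = -(e₁.hom ≫ biprod.desc (d' ≫ biprod.inr) 0 ≫ e₂.inv) ∧
        ∀ i j, ¬(i = n+1 ∧ j = n+2) → H i j = 0 := by
    refine ⟨fun i j => if h : i = n+1 ∧ j = n+2 then
        eqToHom (by rw [h.1]) ≫
          (-(e₁.hom ≫ biprod.desc (d' ≫ biprod.inr) 0 ≫ e₂.inv)) ≫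
            eqToHom (by rw [h.2]) else 0, ?_, ?_⟩
    · simp
    · exact fun i j h => dif_neg h
  have hz : ∀ i j, ¬ (ComplexShape.down ℤ).Rel j i → H i j = 0 := by
    intro i j hn
    refine hH0 i j ?_
    rintro ⟨rfl, rfl⟩
    exact hn (by simp only [ComplexShape.down_Rel]; omega)
  have hc : ∀ i, r i ≫ s i = dNext i H + prevD i H + 𝟙 (C.X i) := by
    intro i
    by_cases h1 : i = n + 1
    · subst h1
      rw [dNext_eq H (show (ComplexShape.down ℤ).Rel (n+1) n by
          simp only [ComplexShape.down_Rel]),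
        prevD_eq H (show (ComplexShape.down ℤ).Rel (n+2) (n+1) by
          simp only [ComplexShape.down_Rel]; omega)]
      rw [hH0 n (n+1) (by omega), hH1, hr1, hs1, hM]
      have key1 : biprod.desc (-(d' ≫ f)) (𝟙 Y) ≫ biprod.inr
          = -(biprod.desc (d' ≫ biprod.inr) 0 ≫
              biprod.desc (biprod.lift c e) (biprod.lift d f)) + 𝟙 (X ⊞ Y) := by
        ext <;> simp [hd, hd', hdW, hdX] <;> abel
      simp only [assoc, Iso.inv_hom_id_assoc, comp_zero, zero_add, Preadditive.neg_comp, Preadditive.comp_neg]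
      rw [reassoc_of% key1]
      simp [Preadditive.comp_add, Preadditive.add_comp]
    by_cases h2 : i = n + 2
    · subst h2
      rw [dNext_eq H (show (ComplexShape.down ℤ).Rel (n+2) (n+1) by
          simp only [ComplexShape.down_Rel]; omega),
        prevD_eq H (show (ComplexShape.down ℤ).Rel (n+3) (n+2) by
          simp only [ComplexShape.down_Rel]; omega)]
      rw [hH0 (n+2) (n+3) (by omega), hH1, hr2, hs2, hM]
      have key2 : biprod.fst ≫ biprod.lift (𝟙 V) (-(c ≫ d'))
          = -(biprod.desc (biprod.lift c e) (biprod.lift d f) ≫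
              biprod.desc (d' ≫ biprod.inr) 0) + 𝟙 (V ⊞ W) := by
        ext <;> simp [hd, hd', hdW, hdX] <;> abel
      simp only [assoc, Iso.inv_hom_id_assoc, zero_comp, add_zero, Preadditive.neg_comp, Preadditive.comp_neg]
      rw [reassoc_of% key2]
      simp [Preadditive.comp_add, Preadditive.add_comp]
    · rw [dNext_eq H (show (ComplexShape.down ℤ).Rel i (i-1) by
          simp only [ComplexShape.down_Rel]; omega),
        prevD_eq H (show (ComplexShape.down ℤ).Rel (i+1) i by
          simp only [ComplexShape.down_Rel])]
      rw [hH0 (i-1) i (fun hx => h2 hx.2), hH0 i (i+1) (fun hx => h1 hx.1)]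
      rw [hro i h1 h2, hso i h1 h2]
      simp
  refine ⟨ElimAux.Dcx C DX r s keyB, ElimAux.φAux C DX r s keyA keyB, gV, gY, gC,
    fun k h1 h2 => hro k h1 h2, hr2, hr1, ?_, ?_⟩
  · rw [ElimAux.Dcx_d C DX r s keyB (show (n : ℤ) + 1 + 1 = n + 2 by omega)]
    show gV.inv ≫ (s (n+2) ≫ C.d (n+2) (n+1) ≫ r (n+1)) ≫ gY.hom = e - c ≫ d' ≫ f
    rw [hs2, hr1, hM]
    simp only [assoc, Iso.inv_hom_id_assoc, Iso.hom_inv_id, comp_id]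
    simp [biprod.lift_desc, hdW, hdX, Preadditive.comp_sub, Preadditive.sub_comp]
    abel
  · exact ElimAux.quasiAux C DX r s keyA keyB hsr H hz hc
end

section
/- The endomorphism algebra End_A(P(s)) of the right A-module P(s) = 1_s·A is isomorphic, as a ℂ-algebra, to ℂ[X]/(X²), via an isomorphism sending X to left multiplication by the loop ab; in particular ab ≠ 0 in A and (ab)² = 0. Moreover End_A(P(e)) ≅ ℂ, i.e. every endomorphism of P(e) = 1_e·A is a scalar multiple of the identity. -/
open CategoryTheory MulOpposite Polynomial

namespace Sl2Q

/-- Generators of the path algebra of the quiver `e ⇄ s`: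
`0 ↦ 1_e`, `1 ↦ 1_s`, `2 ↦ a : e → s`, `3 ↦ b : s → e`. -/
abbrev FA : Type := FreeAlgebra ℂ (Fin 4)

/-- The defining relations of the path algebra `ℂQ/(ba)`:
the trivial paths are orthogonal idempotents summing to `1`, the arrows are
compatible with sources and targets, and the path `e → s → e` (first `a`, then `b`,
written `b * a`) is zero. -/
inductive PathRel : FA → FA → Prop
  | idem_e : PathRel (FreeAlgebra.ι ℂ 0 * FreeAlgebra.ι ℂ 0) (FreeAlgebra.ι ℂ 0)
  | idem_s : PathRel (FreeAlgebra.ι ℂ 1 * FreeAlgebra.ι ℂ 1) (FreeAlgebra.ι ℂ 1)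
  | orth_es : PathRel (FreeAlgebra.ι ℂ 0 * FreeAlgebra.ι ℂ 1) 0
  | orth_se : PathRel (FreeAlgebra.ι ℂ 1 * FreeAlgebra.ι ℂ 0) 0
  | sum_one : PathRel (FreeAlgebra.ι ℂ 0 + FreeAlgebra.ι ℂ 1) 1
  | a_tgt : PathRel (FreeAlgebra.ι ℂ 1 * FreeAlgebra.ι ℂ 2) (FreeAlgebra.ι ℂ 2)
  | a_src : PathRel (FreeAlgebra.ι ℂ 2 * FreeAlgebra.ι ℂ 0) (FreeAlgebra.ι ℂ 2)
  | b_tgt : PathRel (FreeAlgebra.ι ℂ 0 * FreeAlgebra.ι ℂ 3) (FreeAlgebra.ι ℂ 3)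
  | b_src : PathRel (FreeAlgebra.ι ℂ 3 * FreeAlgebra.ι ℂ 1) (FreeAlgebra.ι ℂ 3)
  | ba : PathRel (FreeAlgebra.ι ℂ 3 * FreeAlgebra.ι ℂ 2) 0

/-- The path algebra `A = ℂ[e ⇄ s]/(ba)`. -/
def A : Type := RingQuot PathRel

noncomputable instance : Ring A := inferInstanceAs (Ring (RingQuot PathRel))
noncomputable instance : Algebra ℂ A := inferInstanceAs (Algebra ℂ (RingQuot PathRel))

noncomputable def toA : FreeAlgebra ℂ (Fin 4) →ₐ[ℂ] A := RingQuot.mkAlgHom ℂ PathRel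

noncomputable def gen (i : Fin 4) : A := toA (FreeAlgebra.ι ℂ i)

/-- the idempotent `1_e` -/
noncomputable def oneE : A := gen 0
/-- the idempotent `1_s` -/
noncomputable def oneS : A := gen 1
/-- the arrow `a : e → s` -/
noncomputable def arrA : A := gen 2
/-- the arrow `b : s → e` -/
noncomputable def arrB : A := gen 3
/-- the loop `ab` at `s` (first `b`, then `a`) -/
noncomputable def ab : A := arrA * arrB

lemma rel_eq {x y : FA} (h : PathRel x y) : toA x = toA y :=
  RingQuot.mkAlgHom_rel ℂ h

lemma oneS_mul_arrA : oneS * arrA = arrA := by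
  rw [oneS, arrA, gen, gen, ← map_mul]
  exact rel_eq PathRel.a_tgt

lemma oneE_mul_arrB : oneE * arrB = arrB := by
  rw [oneE, arrB, gen, gen, ← map_mul]
  exact rel_eq PathRel.b_tgt

lemma oneS_mul_ab : oneS * ab = ab := by
  rw [ab, ← mul_assoc, oneS_mul_arrA]

/-- `A` is a right module over itself, i.e. a module over `Aᵐᵒᵖ`;
scalars `ℂ` act compatibly. -/
instance : IsScalarTower ℂ Aᵐᵒᵖ A :=
  ⟨fun c r x => by
    rw [MulOpposite.smul_eq_mul_unop, MulOpposite.smul_eq_mul_unop, MulOpposite.unop_smul,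
      mul_smul_comm]⟩

instance : SMulCommClass Aᵐᵒᵖ ℂ A :=
  ⟨fun r c x => by
    rw [MulOpposite.smul_eq_mul_unop, MulOpposite.smul_eq_mul_unop, smul_mul_assoc]⟩

/-- `P u = u·A`, the right ideal generated by `u`, as a right `A`-module
(i.e. a module over `Aᵐᵒᵖ`). -/
noncomputable def P (u : A) : Submodule Aᵐᵒᵖ A := Submodule.span Aᵐᵒᵖ {u}

lemma mem_P {u z : A} (h : u * z = z) : z ∈ P u :=
  Submodule.mem_span_singleton.mpr ⟨op z, by rw [op_smul_eq_mul, h]⟩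

instance (p : Submodule Aᵐᵒᵖ A) : SMulCommClass Aᵐᵒᵖ ℂ ↥p :=
  ⟨fun r c x => Subtype.ext (smul_comm r c (x : A))⟩

instance (p : Submodule Aᵐᵒᵖ A) : IsScalarTower ℂ Aᵐᵒᵖ ↥p :=
  ⟨fun c r x => Subtype.ext (smul_assoc c r (x : A))⟩

/-- Left multiplication by `z` as a homomorphism of right `A`-modules `P u ⟶ P v`,
where `v * z = z` (i.e. `z ∈ v·A`). -/
noncomputable def lmul (u : A) {v z : A} (h : v * z = z) : ↥(P u) →ₗ[Aᵐᵒᵖ] ↥(P v) where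
  toFun x := ⟨z * (x : A), mem_P (by rw [← mul_assoc, h])⟩
  map_add' x y := Subtype.ext (by simp [mul_add])
  map_smul' r x := Subtype.ext (by
    simp [MulOpposite.smul_eq_mul_unop, mul_assoc])

end Sl2Q

namespace Sl2Q


lemma mul_ee : oneE * oneE = oneE := by
  rw [oneE, gen, ← map_mul]; exact rel_eq PathRel.idem_e
lemma mul_ss : oneS * oneS = oneS := by
  rw [oneS, gen, ← map_mul]; exact rel_eq PathRel.idem_s
lemma mul_es : oneE * oneS = 0 := by
  rw [oneE, oneS, gen, gen, ← map_mul]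
  simpa using rel_eq PathRel.orth_es
lemma mul_se : oneS * oneE = 0 := by
  rw [oneE, oneS, gen, gen, ← map_mul]
  simpa using rel_eq PathRel.orth_se
lemma sum_es : oneE + oneS = 1 := by
  rw [oneE, oneS, gen, gen, ← map_add]
  simpa using rel_eq PathRel.sum_one
lemma mul_ae : arrA * oneE = arrA := by
  rw [oneE, arrA, gen, gen, ← map_mul]; exact rel_eq PathRel.a_src
lemma mul_bs : arrB * oneS = arrB := by
  rw [oneS, arrB, gen, gen, ← map_mul]; exact rel_eq PathRel.b_src
lemma mul_ba : arrB * arrA = 0 := by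
  rw [arrA, arrB, gen, gen, ← map_mul]
  simpa using rel_eq PathRel.ba

lemma mul_ea : oneE * arrA = 0 := by
  rw [← oneS_mul_arrA, ← mul_assoc, mul_es, zero_mul]
lemma mul_as : arrA * oneS = 0 := by
  rw [← mul_ae, mul_assoc, mul_es, mul_zero]
lemma mul_sb : oneS * arrB = 0 := by
  rw [← oneE_mul_arrB, ← mul_assoc, mul_se, zero_mul]
lemma mul_be : arrB * oneE = 0 := by
  rw [← mul_bs, mul_assoc, mul_se, mul_zero]
lemma mul_aa : arrA * arrA = 0 := by
  have h : arrA * arrA = arrA * oneE * (oneS * arrA) := by rw [mul_ae, oneS_mul_arrA]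
  rw [h, mul_assoc arrA, ← mul_assoc oneE, mul_es, zero_mul, mul_zero]
lemma mul_bb : arrB * arrB = 0 := by
  have h : arrB * arrB = arrB * oneS * (oneE * arrB) := by rw [mul_bs, oneE_mul_arrB]
  rw [h, mul_assoc arrB, ← mul_assoc oneS, mul_se, zero_mul, mul_zero]
lemma mul_e_ab : oneE * ab = 0 := by rw [ab, ← mul_assoc, mul_ea, zero_mul]
lemma mul_ab_e : ab * oneE = 0 := by rw [ab, mul_assoc, mul_be, mul_zero]
lemma mul_ab_s : ab * oneS = ab := by rw [ab, mul_assoc, mul_bs]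
lemma mul_a_ab : arrA * ab = 0 := by rw [ab, ← mul_assoc, mul_aa, zero_mul]
lemma mul_ab_a : ab * arrA = 0 := by rw [ab, mul_assoc, mul_ba, mul_zero]
lemma mul_b_ab : arrB * ab = 0 := by rw [ab, ← mul_assoc, mul_ba, zero_mul]
lemma mul_ab_b : ab * arrB = 0 := by rw [ab, mul_assoc, mul_bb, mul_zero]
lemma mul_ab_ab : ab * ab = 0 := by rw [ab, mul_assoc, ← mul_assoc arrB, mul_ba, zero_mul, mul_zero]


/-- Matrices of left multiplication on the left ideal `A·1_s`, basis `(1_s, b, ab)`. -/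
noncomputable def repM : Fin 4 → Matrix (Fin 3) (Fin 3) ℂ
  | 0 => !![0,0,0; 0,1,0; 0,0,0]
  | 1 => !![1,0,0; 0,0,0; 0,0,1]
  | 2 => !![0,0,0; 0,0,0; 0,1,0]
  | 3 => !![0,0,0; 1,0,0; 0,0,0]

lemma repRel : ∀ ⦃x y : FA⦄, PathRel x y →
    FreeAlgebra.lift ℂ repM x = FreeAlgebra.lift ℂ repM y := by
  intro x y h
  cases h <;>
    simp [repM, Matrix.mul_fin_three, Matrix.one_fin_three] <;>
    (ext i; fin_cases i <;> simp <;> (rename_i j; fin_cases j <;> rfl))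

noncomputable def rep : A →ₐ[ℂ] Matrix (Fin 3) (Fin 3) ℂ :=
  RingQuot.liftAlgHom ℂ ⟨FreeAlgebra.lift ℂ repM, repRel⟩

lemma rep_gen (i : Fin 4) : rep (gen i) = repM i := by
  have h := RingQuot.liftAlgHom_mkAlgHom_apply ℂ (FreeAlgebra.lift ℂ repM) repRel
    (FreeAlgebra.ι ℂ i)
  rw [FreeAlgebra.lift_ι_apply] at h
  exact h

lemma indep {c d : ℂ} (h : c • oneS + d • ab = 0) : c = 0 ∧ d = 0 := by
  have h2 := congrArg rep h
  rw [map_add, map_smul, map_smul, ab, map_mul, oneS, arrA, arrB, rep_gen, rep_gen, rep_gen,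
    map_zero] at h2
  have h00 := congrFun (congrFun h2 0) 0
  have h20 := congrFun (congrFun h2 2) 0
  simp [repM, Matrix.mul_fin_three, Matrix.vecHead, Matrix.vecTail] at h00 h20
  exact ⟨h00, h20⟩


/-- The spanning set of paths. -/
noncomputable def pathSet : Set A := {oneE, oneS, arrA, arrB, ab}

lemma mul_mem_span : ∀ x ∈ pathSet, ∀ y ∈ pathSet,
    x * y ∈ Submodule.span ℂ pathSet := by
  have hsub := Submodule.subset_span (R := ℂ) (s := pathSet)
  have he : oneE ∈ Submodule.span ℂ pathSet := hsub (by simp [pathSet])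
  have hs : oneS ∈ Submodule.span ℂ pathSet := hsub (by simp [pathSet])
  have ha : arrA ∈ Submodule.span ℂ pathSet := hsub (by simp [pathSet])
  have hb : arrB ∈ Submodule.span ℂ pathSet := hsub (by simp [pathSet])
  have hab : ab ∈ Submodule.span ℂ pathSet := hsub (by simp [pathSet])
  have hAB : arrA * arrB = ab := rfl
  intro x hx y hy
  rcases hx with rfl | rfl | rfl | rfl | rfl <;>
    rcases hy with rfl | rfl | rfl | rfl | rfl <;>
    simp [mul_ee, mul_ss, mul_es, mul_se, oneS_mul_arrA, mul_ae, oneE_mul_arrB, mul_bs,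
      mul_ba, mul_ea, mul_as, mul_sb, mul_be, mul_aa, mul_bb, mul_e_ab, mul_ab_e,
      oneS_mul_ab, mul_ab_s, mul_a_ab, mul_ab_a, mul_b_ab, mul_ab_b, mul_ab_ab, hAB] <;>
    first
      | exact Submodule.zero_mem _
      | assumption

lemma span_eq_top (z : A) : z ∈ Submodule.span ℂ pathSet := by
  have hsub := Submodule.subset_span (R := ℂ) (s := pathSet)
  have h1 : (1 : A) ∈ Submodule.span ℂ pathSet := by
    rw [← sum_es]
    exact Submodule.add_mem _ (hsub (by simp [pathSet])) (hsub (by simp [pathSet]))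
  obtain ⟨w, rfl⟩ := RingQuot.mkAlgHom_surjective ℂ PathRel z
  induction w using FreeAlgebra.induction with
  | grade0 r =>
      rw [AlgHom.commutes, Algebra.algebraMap_eq_smul_one]
      exact Submodule.smul_mem _ r h1
  | grade1 i =>
      have he : oneE ∈ Submodule.span ℂ pathSet := hsub (by simp [pathSet])
      have hs : oneS ∈ Submodule.span ℂ pathSet := hsub (by simp [pathSet])
      have ha : arrA ∈ Submodule.span ℂ pathSet := hsub (by simp [pathSet])
      have hb : arrB ∈ Submodule.span ℂ pathSet := hsub (by simp [pathSet])
      fin_cases i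
      · exact he
      · exact hs
      · exact ha
      · exact hb
  | mul a b iha ihb =>
      rw [map_mul]
      change toA a ∈ Submodule.span ℂ pathSet at iha
      change toA b ∈ Submodule.span ℂ pathSet at ihb
      change (toA a : A) * (toA b : A) ∈ Submodule.span ℂ pathSet
      refine Submodule.span_induction ?_ ?_ ?_ ?_ iha
      · intro x hx
        refine Submodule.span_induction ?_ ?_ ?_ ?_ ihb
        · intro y hy; exact mul_mem_span x hx y hy
        · simp
        · intro y z _ _ h1 h2; rw [mul_add]; exact Submodule.add_mem _ h1 h2
        · intro c y _ h1; rw [mul_smul_comm]; exact Submodule.smul_mem _ c h1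
      · simp
      · intro x y _ _ h1 h2; rw [add_mul]; exact Submodule.add_mem _ h1 h2
      · intro c x _ h1; rw [smul_mul_assoc]; exact Submodule.smul_mem _ c h1
  | add a b iha ihb =>
      rw [map_add]; exact Submodule.add_mem _ iha ihb

lemma exists_coeffs (z : A) : ∃ c0 c1 c2 c3 c4 : ℂ,
    z = c0 • oneE + c1 • oneS + c2 • arrA + c3 • arrB + c4 • ab := by
  have h := span_eq_top z
  rw [pathSet, Submodule.mem_span_insert] at h
  obtain ⟨c0, z1, h1, rfl⟩ := h
  rw [Submodule.mem_span_insert] at h1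
  obtain ⟨c1, z2, h2, rfl⟩ := h1
  rw [Submodule.mem_span_insert] at h2
  obtain ⟨c2, z3, h3, rfl⟩ := h2
  rw [Submodule.mem_span_insert] at h3
  obtain ⟨c3, z4, h4, rfl⟩ := h3
  rw [Submodule.mem_span_singleton] at h4
  obtain ⟨c4, rfl⟩ := h4
  exact ⟨c0, c1, c2, c3, c4, by abel⟩


lemma u_mul {u : A} (huu : u * u = u) {x : A} (hx : x ∈ P u) : u * x = x := by
  obtain ⟨r, rfl⟩ := Submodule.mem_span_singleton.mp hx
  rw [MulOpposite.smul_eq_mul_unop, ← mul_assoc, huu]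

lemma endo_apply {u : A} (huu : u * u = u) (ψ : Module.End Aᵐᵒᵖ ↥(P u)) (x : ↥(P u)) :
    (ψ x : A) = (ψ ⟨u, mem_P huu⟩ : A) * (x : A) := by
  have hx : x = op (x : A) • (⟨u, mem_P huu⟩ : ↥(P u)) := by
    apply Subtype.ext
    show (x : A) = u * (x : A)
    exact (u_mul huu x.2).symm
  calc (ψ x : A) = (ψ (op (x : A) • ⟨u, mem_P huu⟩) : A) := by rw [← hx]
    _ = ((op (x : A) • ψ ⟨u, mem_P huu⟩ : ↥(P u)) : A) := by rw [map_smul]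
    _ = (ψ ⟨u, mem_P huu⟩ : A) * (x : A) := rfl

lemma endo_fix {u : A} (huu : u * u = u) (ψ : Module.End Aᵐᵒᵖ ↥(P u)) :
    (ψ ⟨u, mem_P huu⟩ : A) * u = (ψ ⟨u, mem_P huu⟩ : A) := by
  conv_rhs => rw [show (⟨u, mem_P huu⟩ : ↥(P u)) = op u • ⟨u, mem_P huu⟩ from
    Subtype.ext (by show u = u * u; rw [huu])]
  rw [map_smul]
  rfl

/-- `1_s` as an element of `P oneS`. -/
noncomputable def us : ↥(P oneS) := ⟨oneS, mem_P mul_ss⟩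

/-- The endomorphism "left multiplication by `ab`". -/
noncomputable def Lab : Module.End Aᵐᵒᵖ ↥(P oneS) := lmul oneS oneS_mul_ab

lemma Lab_sq : Lab * Lab = 0 := by
  apply LinearMap.ext
  intro x
  apply Subtype.ext
  show ab * (ab * (x : A)) = (0 : A)
  rw [← mul_assoc, mul_ab_ab, zero_mul]

/-- anything in `1_s·A·1_s` is `c•1_s + d•ab` -/
lemma sAs {y : A} (h1 : oneS * y = y) (h2 : y * oneS = y) :
    ∃ c d : ℂ, y = c • oneS + d • ab := by
  obtain ⟨c0, c1, c2, c3, c4, rfl⟩ := exists_coeffs y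
  refine ⟨c1, c4, ?_⟩
  rw [← h1, ← h2]
  simp [mul_add, add_mul, mul_smul_comm, smul_mul_assoc, mul_ee, mul_ss, mul_es, mul_se,
    oneS_mul_arrA, mul_ae, oneE_mul_arrB, mul_bs, mul_ba, mul_ea, mul_as, mul_sb, mul_be,
    oneS_mul_ab, mul_ab_s]

/-- anything in `1_e·A·1_e` is `c•1_e` -/
lemma eAe {y : A} (h1 : oneE * y = y) (h2 : y * oneE = y) : ∃ c : ℂ, y = c • oneE := by
  obtain ⟨c0, c1, c2, c3, c4, rfl⟩ := exists_coeffs y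
  refine ⟨c0, ?_⟩
  rw [← h1, ← h2]
  simp [mul_add, add_mul, mul_smul_comm, smul_mul_assoc, mul_ee, mul_ss, mul_es, mul_se,
    oneS_mul_arrA, mul_ae, oneE_mul_arrB, mul_bs, mul_ba, mul_ea, mul_as, mul_sb, mul_be,
    mul_e_ab, mul_ab_e]


noncomputable def Phi : ℂ[X] →ₐ[ℂ] Module.End Aᵐᵒᵖ ↥(P oneS) := aeval Lab

lemma Phi_X : Phi X = Lab := aeval_X Lab

lemma Phi_Xsq_mul (q : ℂ[X]) : Phi (X ^ 2 * q) = 0 := by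
  rw [map_mul, map_pow, Phi_X, pow_two, Lab_sq, zero_mul]

lemma Phi_ker : ∀ p ∈ Ideal.span {(X : ℂ[X]) ^ 2}, Phi p = 0 := by
  intro p hp
  obtain ⟨q, rfl⟩ := Ideal.mem_span_singleton.mp hp
  exact Phi_Xsq_mul q

noncomputable def phi0 : (ℂ[X] ⧸ Ideal.span {(X : ℂ[X]) ^ 2}) →ₐ[ℂ] Module.End Aᵐᵒᵖ ↥(P oneS) :=
  Ideal.Quotient.liftₐ _ Phi Phi_ker

lemma phi0_mk (p : ℂ[X]) : phi0 (Ideal.Quotient.mk _ p) = Phi p :=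
  Ideal.Quotient.liftₐ_apply _ Phi Phi_ker p

lemma Phi_linear (c d : ℂ) : Phi (C c + C d * X) = c • (1 : Module.End Aᵐᵒᵖ ↥(P oneS)) + d • Lab := by
  simp only [Phi, map_add, map_mul, aeval_C, aeval_X, Algebra.algebraMap_eq_smul_one,
    smul_mul_assoc, one_mul]

lemma val_at_us (c d : ℂ) :
    (((c • (1 : Module.End Aᵐᵒᵖ ↥(P oneS)) + d • Lab) us : ↥(P oneS)) : A)
      = c • oneS + d • ab := by
  show c • oneS + d • (ab * oneS) = c • oneS + d • ab
  rw [mul_ab_s]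

lemma Phi_zero_mem {p : ℂ[X]} (hp : Phi p = 0) : p ∈ Ideal.span {(X : ℂ[X]) ^ 2} := by
  obtain ⟨q, hq⟩ := X_dvd_iff.mpr (show (p - C (p.coeff 0)).coeff 0 = 0 by simp)
  obtain ⟨q', hq'⟩ := X_dvd_iff.mpr (show (q - C (q.coeff 0)).coeff 0 = 0 by simp)
  set a := p.coeff 0 with ha
  set b := q.coeff 0 with hb
  have h1 : p = C a + X * q := by rw [← hq]; ring
  have h2 : q = C b + X * q' := by rw [← hq']; ring
  have hp' : p = C a + C b * X + X ^ 2 * q' := by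
    conv_lhs => rw [h1, h2]
    ring
  have hPhi : Phi p = a • (1 : Module.End Aᵐᵒᵖ ↥(P oneS)) + b • Lab := by
    rw [hp', map_add, Phi_Xsq_mul, add_zero, Phi_linear]
  rw [hp] at hPhi
  have h0 : a • oneS + b • ab = 0 := by
    rw [← val_at_us, ← hPhi]
    rfl
  obtain ⟨hc, hd⟩ := indep h0
  rw [hp', hc, hd]
  simp only [map_zero, zero_mul, zero_add, add_zero]
  exact Ideal.mem_span_singleton.mpr ⟨q', rfl⟩

lemma phi0_injective : Function.Injective phi0 := by
  intro x y h
  obtain ⟨p, rfl⟩ := Ideal.Quotient.mk_surjective x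
  obtain ⟨q, rfl⟩ := Ideal.Quotient.mk_surjective y
  rw [Ideal.Quotient.eq]
  apply Phi_zero_mem
  rw [map_sub, ← phi0_mk, ← phi0_mk, h, sub_self]

lemma phi0_surjective : Function.Surjective phi0 := by
  intro ψ
  have h1 : oneS * (ψ us : A) = (ψ us : A) := u_mul mul_ss (ψ us).2
  have h2 : (ψ us : A) * oneS = (ψ us : A) := endo_fix mul_ss ψ
  obtain ⟨c, d, hy⟩ := sAs h1 h2
  refine ⟨Ideal.Quotient.mk _ (C c + C d * X), ?_⟩
  rw [phi0_mk, Phi_linear]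
  apply LinearMap.ext
  intro x
  apply Subtype.ext
  show c • (x : A) + d • (ab * (x : A)) = (ψ x : A)
  rw [endo_apply mul_ss ψ x]
  show c • (x : A) + d • (ab * (x : A)) = (ψ us : A) * (x : A)
  rw [hy, add_mul, smul_mul_assoc, smul_mul_assoc, u_mul mul_ss x.2]

/-- final -/
theorem endPs_iso_dual_numbers_and_endPe_scalar :
    (∃ φ : (ℂ[X] ⧸ Ideal.span {(X : ℂ[X]) ^ 2}) ≃ₐ[ℂ] Module.End Aᵐᵒᵖ ↥(P oneS),
        φ (Ideal.Quotient.mk _ (X : ℂ[X])) = lmul oneS oneS_mul_ab) ∧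
    ab ≠ 0 ∧ ab * ab = 0 ∧
    ∀ ψ : Module.End Aᵐᵒᵖ ↥(P oneE), ∃ c : ℂ, ψ = c • LinearMap.id := by
  refine ⟨⟨AlgEquiv.ofBijective phi0 ⟨phi0_injective, phi0_surjective⟩, ?_⟩, ?_, mul_ab_ab, ?_⟩
  · show phi0 (Ideal.Quotient.mk _ X) = lmul oneS oneS_mul_ab
    rw [phi0_mk, Phi_X]
    rfl
  · intro h
    have h0 : (0 : ℂ) • oneS + (1 : ℂ) • ab = 0 := by simp [h]
    exact one_ne_zero (indep h0).2
  · intro ψ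
    have h1 : oneE * (ψ ⟨oneE, mem_P mul_ee⟩ : A) = (ψ ⟨oneE, mem_P mul_ee⟩ : A) :=
      u_mul mul_ee (ψ ⟨oneE, mem_P mul_ee⟩).2
    have h2 : (ψ ⟨oneE, mem_P mul_ee⟩ : A) * oneE = (ψ ⟨oneE, mem_P mul_ee⟩ : A) :=
      endo_fix mul_ee ψ
    obtain ⟨c, hc⟩ := eAe h1 h2
    refine ⟨c, ?_⟩
    apply LinearMap.ext
    intro x
    apply Subtype.ext
    show (ψ x : A) = c • (x : A)
    rw [endo_apply mul_ee ψ x, hc, smul_mul_assoc, u_mul mul_ee x.2]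


end Sl2Q
end

section
/- For every n ≥ 2 and all 0 ≤ i, j ≤ n−1, the ℂ-dimension of the space of right A_n^𝔭-module homomorphisms Hom_{A_n^𝔭}(P(σ_j), P(σ_i)) ≅ 1_{σ_i}·A_n^𝔭·1_{σ_j} equals: 2 if i = j ≥ 1; 1 if i = j = 0; 1 if |i − j| = 1; and 0 if |i − j| ≥ 2. Consequently dim_ℂ A_n^𝔭 = 4n − 3. -/
open CategoryTheory MulOpposite Polynomial

namespace SlnQ

/-- Generators of the path algebra of the quiver
`σ₀ ⇄ σ₁ ⇄ ⋯ ⇄ σ_{n-1}`: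
`Sum.inl i ↦` the trivial path at `σ_i`,
`Sum.inr (Sum.inl i) ↦ α_i : σ_{i-1} → σ_i`,
`Sum.inr (Sum.inr i) ↦ β_i : σ_i → σ_{i-1}`. -/
abbrev Gen : Type := ℕ ⊕ (ℕ ⊕ ℕ)

noncomputable def vg (i : ℕ) : FreeAlgebra ℂ Gen := FreeAlgebra.ι ℂ (Sum.inl i)
noncomputable def ag (i : ℕ) : FreeAlgebra ℂ Gen := FreeAlgebra.ι ℂ (Sum.inr (Sum.inl i))
noncomputable def bg (i : ℕ) : FreeAlgebra ℂ Gen := FreeAlgebra.ι ℂ (Sum.inr (Sum.inr i))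

/-- The defining relations of `A_n^𝔭`: the trivial paths at the vertices
`σ₀, …, σ_{n-1}` are orthogonal idempotents summing to `1`; the arrows
`α_i : σ_{i-1} → σ_i` and `β_i : σ_i → σ_{i-1}` (for `1 ≤ i ≤ n-1`) are compatible
with their sources and targets (generators with out-of-range indices are zero);
and the quiver relations hold: `β₁ ∘ α₁ = 0` at `σ₀` (written `β₁ * α₁`, first
`α₁` then `β₁`), the two loops `α_i ∘ β_i` and `β_{i+1} ∘ α_{i+1}` at `σ_i`
coincide for `1 ≤ i ≤ n-2`, and all monotone length-two paths vanish. -/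
inductive Rel (n : ℕ) : FreeAlgebra ℂ Gen → FreeAlgebra ℂ Gen → Prop
  | idem (i : ℕ) : Rel n (vg i * vg i) (vg i)
  | orth (i j : ℕ) (h : i ≠ j) : Rel n (vg i * vg j) 0
  | vzero (i : ℕ) (h : n ≤ i) : Rel n (vg i) 0
  | sum_one : Rel n ((Finset.range n).sum vg) 1
  | azero (i : ℕ) (h : i = 0 ∨ n ≤ i) : Rel n (ag i) 0
  | bzero (i : ℕ) (h : i = 0 ∨ n ≤ i) : Rel n (bg i) 0
  | a_tgt (i : ℕ) : Rel n (vg i * ag i) (ag i)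
  | a_src (i : ℕ) : Rel n (ag i * vg (i - 1)) (ag i)
  | b_tgt (i : ℕ) : Rel n (vg (i - 1) * bg i) (bg i)
  | b_src (i : ℕ) : Rel n (bg i * vg i) (bg i)
  | ba_one : Rel n (bg 1 * ag 1) 0
  | loops (i : ℕ) (h : 1 ≤ i) (h' : i ≤ n - 2) :
      Rel n (ag i * bg i) (bg (i + 1) * ag (i + 1))
  | aa (i : ℕ) : Rel n (ag (i + 1) * ag i) 0
  | bb (i : ℕ) : Rel n (bg i * bg (i + 1)) 0

/-- The algebra `A_n^𝔭`, presented as the path algebra of the quiver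
`σ₀ ⇄ σ₁ ⇄ ⋯ ⇄ σ_{n-1}` modulo the relations above. -/
def An (n : ℕ) : Type := RingQuot (Rel n)

noncomputable instance (n : ℕ) : Ring (An n) := inferInstanceAs (Ring (RingQuot (Rel n)))
noncomputable instance (n : ℕ) : Algebra ℂ (An n) :=
  inferInstanceAs (Algebra ℂ (RingQuot (Rel n)))

noncomputable def toAn (n : ℕ) : FreeAlgebra ℂ Gen →ₐ[ℂ] An n := RingQuot.mkAlgHom ℂ (Rel n)

/-- the idempotent `1_{σ_i}` -/
noncomputable def e (n i : ℕ) : An n := toAn n (vg i)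
/-- the arrow `α_i : σ_{i-1} → σ_i` -/
noncomputable def a (n i : ℕ) : An n := toAn n (ag i)
/-- the arrow `β_i : σ_i → σ_{i-1}` -/
noncomputable def b (n i : ℕ) : An n := toAn n (bg i)
/-- the loop `x_i = α_i ∘ β_i` at `σ_i` (first `β_i`, then `α_i`) -/
noncomputable def x (n i : ℕ) : An n := a n i * b n i

lemma rel_eq {n : ℕ} {p q : FreeAlgebra ℂ Gen} (h : Rel n p q) : toAn n p = toAn n q :=
  RingQuot.mkAlgHom_rel ℂ h

lemma e_mul_a (n i : ℕ) : e n i * a n i = a n i := by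
  rw [e, a, ← map_mul]; exact rel_eq (Rel.a_tgt i)

lemma e_mul_b (n i : ℕ) : e n (i - 1) * b n i = b n i := by
  rw [e, b, ← map_mul]; exact rel_eq (Rel.b_tgt i)

lemma e_mul_x (n i : ℕ) : e n i * x n i = x n i := by
  rw [x, ← mul_assoc, e_mul_a]

instance (n : ℕ) : IsScalarTower ℂ (An n)ᵐᵒᵖ (An n) :=
  ⟨fun c r m => by
    rw [MulOpposite.smul_eq_mul_unop, MulOpposite.smul_eq_mul_unop, MulOpposite.unop_smul,
      mul_smul_comm]⟩

instance (n : ℕ) : SMulCommClass (An n)ᵐᵒᵖ ℂ (An n) :=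
  ⟨fun r c m => by
    rw [MulOpposite.smul_eq_mul_unop, MulOpposite.smul_eq_mul_unop, smul_mul_assoc]⟩

/-- `P(σ_i) = 1_{σ_i}·A_n^𝔭`, as a right `A_n^𝔭`-module
(i.e. a module over `(A_n^𝔭)ᵐᵒᵖ`). -/
noncomputable def P (n i : ℕ) : Submodule (An n)ᵐᵒᵖ (An n) :=
  Submodule.span (An n)ᵐᵒᵖ {e n i}

lemma mem_P {n i : ℕ} {z : An n} (h : e n i * z = z) : z ∈ P n i :=
  Submodule.mem_span_singleton.mpr ⟨op z, by rw [op_smul_eq_mul, h]⟩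

instance {n : ℕ} (p : Submodule (An n)ᵐᵒᵖ (An n)) : SMulCommClass (An n)ᵐᵒᵖ ℂ ↥p :=
  ⟨fun r c m => Subtype.ext (smul_comm r c (m : An n))⟩

instance {n : ℕ} (p : Submodule (An n)ᵐᵒᵖ (An n)) : IsScalarTower ℂ (An n)ᵐᵒᵖ ↥p :=
  ⟨fun c r m => Subtype.ext (smul_assoc c r (m : An n))⟩

/-- Left multiplication by `z` as a homomorphism of right `A_n^𝔭`-modules
`P(σ_i) ⟶ P(σ_j)`, where `1_{σ_j} * z = z`. -/
noncomputable def lmul (n i : ℕ) {j : ℕ} {z : An n} (h : e n j * z = z) :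
    ↥(P n i) →ₗ[(An n)ᵐᵒᵖ] ↥(P n j) where
  toFun m := ⟨z * (m : An n), mem_P (by rw [← mul_assoc, h])⟩
  map_add' m m' := Subtype.ext (by simp [mul_add])
  map_smul' r m := Subtype.ext (by simp [MulOpposite.smul_eq_mul_unop, mul_assoc])

end SlnQ
namespace SlnQ

section Table

variable (n : ℕ)

lemma e_zero {i : ℕ} (h : n ≤ i) : e n i = 0 := by
  have := rel_eq (Rel.vzero (n := n) i h); rw [e]; simpa using this

lemma a_zero {i : ℕ} (h : i = 0 ∨ n ≤ i) : a n i = 0 := by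
  have := rel_eq (Rel.azero (n := n) i h); rw [a]; simpa using this

lemma b_zero {i : ℕ} (h : i = 0 ∨ n ≤ i) : b n i = 0 := by
  have := rel_eq (Rel.bzero (n := n) i h); rw [b]; simpa using this

lemma e_idem (i : ℕ) : e n i * e n i = e n i := by
  rw [e, ← map_mul]; exact rel_eq (Rel.idem i)

lemma e_orth {i j : ℕ} (h : i ≠ j) : e n i * e n j = 0 := by
  have := rel_eq (Rel.orth (n := n) i j h)
  rw [e, e, ← map_mul]; simpa using this

lemma eE (i j : ℕ) : e n i * e n j = if i = j then e n i else 0 := by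
  split_ifs with h
  · subst h; exact e_idem n i
  · exact e_orth n h

lemma aE (k i : ℕ) : a n k * e n i = if k - 1 = i then a n k else 0 := by
  have hsrc : a n k * e n (k - 1) = a n k := by
    rw [a, e, ← map_mul]; exact rel_eq (Rel.a_src k)
  calc a n k * e n i = a n k * (e n (k-1) * e n i) := by rw [← mul_assoc, hsrc]
    _ = _ := by rw [eE]; split_ifs with h <;> simp [hsrc]

lemma bE (k i : ℕ) : b n k * e n i = if k = i then b n k else 0 := by
  have hsrc : b n k * e n k = b n k := by
    rw [b, e, ← map_mul]; exact rel_eq (Rel.b_src k)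
  calc b n k * e n i = b n k * (e n k * e n i) := by rw [← mul_assoc, hsrc]
    _ = _ := by rw [eE]; split_ifs with h <;> simp [hsrc]

lemma eA (i k : ℕ) : e n i * a n k = if i = k then a n k else 0 := by
  calc e n i * a n k = (e n i * e n k) * a n k := by rw [mul_assoc, e_mul_a]
    _ = _ := by rw [eE]; split_ifs with h <;> simp [h, e_mul_a]

lemma eB (i k : ℕ) : e n i * b n k = if i = k - 1 then b n k else 0 := by
  calc e n i * b n k = (e n i * e n (k-1)) * b n k := by rw [mul_assoc, e_mul_b]
    _ = _ := by rw [eE]; split_ifs with h <;> simp [h, e_mul_b]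

lemma aA (k j : ℕ) : a n k * a n j = 0 := by
  rcases Nat.eq_zero_or_pos k with hk | hk
  · subst hk; rw [a_zero n (Or.inl rfl), zero_mul]
  · by_cases h : k - 1 = j
    · have : k = j + 1 := by omega
      subst this
      have := rel_eq (Rel.aa (n := n) j)
      rw [a, a, ← map_mul]; simpa using this
    · calc a n k * a n j = (a n k * e n (k-1)) * (e n j * a n j) := by
            rw [aE, if_pos rfl, e_mul_a]
        _ = a n k * (e n (k-1) * e n j) * a n j := by noncomm_ring
        _ = 0 := by rw [eE, if_neg h]; simp

lemma bB (k j : ℕ) : b n k * b n j = 0 := by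
  rcases Nat.eq_zero_or_pos j with hj | hj
  · subst hj; rw [b_zero n (Or.inl rfl), mul_zero]
  · by_cases h : k = j - 1
    · have : j = k + 1 := by omega
      subst this
      have := rel_eq (Rel.bb (n := n) k)
      rw [b, b, ← map_mul]; simpa using this
    · calc b n k * b n j = (b n k * e n k) * (e n (j-1) * b n j) := by
            rw [bE, if_pos rfl, e_mul_b]
        _ = b n k * (e n k * e n (j-1)) * b n j := by noncomm_ring
        _ = 0 := by rw [eE, if_neg h]; simp

lemma aB (k j : ℕ) : a n k * b n j = if k = j then x n k else 0 := by
  split_ifs with h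
  · subst h; rfl
  · rcases Nat.eq_zero_or_pos k with hk | hk
    · subst hk; rw [a_zero n (Or.inl rfl), zero_mul]
    · rcases Nat.eq_zero_or_pos j with hj | hj
      · subst hj; rw [b_zero n (Or.inl rfl), mul_zero]
      · calc a n k * b n j = (a n k * e n (k-1)) * (e n (j-1) * b n j) := by
              rw [aE, if_pos rfl, e_mul_b]
          _ = a n k * (e n (k-1) * e n (j-1)) * b n j := by noncomm_ring
          _ = 0 := by rw [eE, if_neg (by omega)]; simp

lemma bA (k j : ℕ) : b n k * a n j =
    if k = j ∧ 2 ≤ k ∧ k ≤ n - 1 then x n (k - 1) else 0 := by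
  by_cases h : k = j
  · subst h
    by_cases h2 : 2 ≤ k
    · by_cases h3 : k ≤ n - 1
      · rw [if_pos ⟨rfl, h2, h3⟩]
        have := rel_eq (Rel.loops (n := n) (k-1) (by omega) (by omega))
        have hk1 : k - 1 + 1 = k := by omega
        rw [hk1] at this
        show b n k * a n k = x n (k - 1)
        have hx : x n (k-1) = toAn n (ag (k-1) * bg (k-1)) := by
          rw [x, a, b, map_mul]
        have hba : b n k * a n k = toAn n (bg k * ag k) := by rw [b, a, map_mul]
        rw [hx, hba, this]
      · rw [if_neg (by tauto)]
        rw [a_zero n (Or.inr (by omega)), mul_zero]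
    · rw [if_neg (by tauto)]
      rcases Nat.eq_zero_or_pos k with hk | hk
      · subst hk; rw [b_zero n (Or.inl rfl), zero_mul]
      · have hk1 : k = 1 := by omega
        subst hk1
        have := rel_eq (Rel.ba_one (n := n))
        rw [b, a, ← map_mul]; simpa using this
  · rw [if_neg (by tauto)]
    calc b n k * a n j = (b n k * e n k) * (e n j * a n j) := by
          rw [bE, if_pos rfl, e_mul_a]
      _ = b n k * (e n k * e n j) * a n j := by noncomm_ring
      _ = 0 := by rw [eE, if_neg h]; simp

lemma x_def (k : ℕ) : x n k = a n k * b n k := rfl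

lemma aX (k j : ℕ) : a n k * x n j = 0 := by
  rw [x_def, ← mul_assoc, aA, zero_mul]

lemma xB (k j : ℕ) : x n k * b n j = 0 := by
  rw [x_def, mul_assoc, bB, mul_zero]

lemma xA (k j : ℕ) : x n k * a n j = 0 := by
  rw [x_def, mul_assoc, bA]
  split_ifs with h
  · exact aX n k (k-1)
  · rw [mul_zero]

lemma bX (k j : ℕ) : b n k * x n j = 0 := by
  rw [x_def n j, ← mul_assoc, bA]
  split_ifs with h
  · exact xB n (k-1) j
  · rw [zero_mul]

lemma xX (k j : ℕ) : x n k * x n j = 0 := by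
  rw [x_def n j, ← mul_assoc, xA, zero_mul]

lemma eX (i k : ℕ) : e n i * x n k = if i = k then x n k else 0 := by
  rw [x_def, ← mul_assoc, eA]
  split_ifs with h <;> simp [x_def]

lemma xE (k i : ℕ) : x n k * e n i = if k = i then x n k else 0 := by
  rw [x_def, mul_assoc, bE]
  split_ifs with h <;> simp [x_def]

lemma one_eq_sum : (1 : An n) = (Finset.range n).sum (e n) := by
  have h := rel_eq (Rel.sum_one (n := n))
  rw [map_sum, map_one] at h
  exact h.symm

end Table

end SlnQ
namespace SlnQ

section Model

/-- The underlying space of the model representation. -/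
abbrev Vm (n : ℕ) : Type := Fin n × Fin n × Fin 3 → ℂ

/-- model operator for the trivial path `e_i` (filter on target). -/
noncomputable def Le (n i : ℕ) : Module.End ℂ (Vm n) where
  toFun f d := if (d.2.1 : ℕ) = i then f d else 0
  map_add' f g := by funext d; simp only [Pi.add_apply]; split_ifs <;> simp
  map_smul' c f := by funext d; simp only [Pi.smul_apply, RingHom.id_apply, smul_eq_mul]; split_ifs <;> simp

/-- a total way of producing elements of `Fin n`, with junk fallback. -/
def fin' {n : ℕ} (d : Fin n) (m : ℕ) : Fin n := if h : m < n then ⟨m, h⟩ else d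

lemma fin'_val {n : ℕ} (d : Fin n) (m : ℕ) :
    ((fin' d m : Fin n) : ℕ) = if m < n then m else (d : ℕ) := by
  rw [fin']; split_ifs <;> rfl

/-- model operator for the arrow `a_k`. -/
noncomputable def La (n k : ℕ) : Module.End ℂ (Vm n) where
  toFun f d :=
    if ((d.1 : ℕ) + 1 = k ∧ (d.2.1 : ℕ) = k ∧ (d.2.2 : ℕ) = 1) then f (d.1, d.1, 0)
    else if ((d.1 : ℕ) = k ∧ (d.2.1 : ℕ) = k ∧ (d.2.2 : ℕ) = 2 ∧ 1 ≤ k) then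
      f (d.1, fin' d.1 (k - 1), 1)
    else 0
  map_add' f g := by funext d; simp only [Pi.add_apply]; split_ifs <;> simp
  map_smul' c f := by funext d; simp only [Pi.smul_apply, RingHom.id_apply, smul_eq_mul]; split_ifs <;> simp

/-- model operator for the arrow `b_k`. -/
noncomputable def Lb (n k : ℕ) : Module.End ℂ (Vm n) where
  toFun f d :=
    if ((d.1 : ℕ) = k ∧ (d.2.1 : ℕ) + 1 = k ∧ (d.2.2 : ℕ) = 1) then f (d.1, d.1, 0)
    else if ((d.1 : ℕ) + 1 = k ∧ (d.2.1 : ℕ) + 1 = k ∧ (d.2.2 : ℕ) = 2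
        ∧ 1 ≤ (d.1 : ℕ) ∧ k < n) then
      f (d.1, fin' d.1 k, 1)
    else 0
  map_add' f g := by funext d; simp only [Pi.add_apply]; split_ifs <;> simp
  map_smul' c f := by funext d; simp only [Pi.smul_apply, RingHom.id_apply, smul_eq_mul]; split_ifs <;> simp

variable (n : ℕ)

lemma fv0 : ((0 : Fin 3) : ℕ) = 0 := rfl
lemma fv1 : ((1 : Fin 3) : ℕ) = 1 := rfl
lemma fv2 : ((2 : Fin 3) : ℕ) = 2 := rfl

lemma R_idem (i : ℕ) : Le n i * Le n i = Le n i := by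
  refine LinearMap.ext fun f => funext fun d => ?_
  obtain ⟨u, v, l⟩ := d
  simp only [Module.End.mul_apply, Le, LinearMap.coe_mk, AddHom.coe_mk, fv0, fv1, fv2, fin'_val]
  split_ifs <;>
      (try simp only [false_and, and_false, true_and, and_true, le_refl, not_true,
        not_false_eq_true] at *) <;>
      first | rfl | omega

lemma R_orth {i j : ℕ} (h : i ≠ j) : Le n i * Le n j = 0 := by
  refine LinearMap.ext fun f => funext fun d => ?_
  obtain ⟨u, v, l⟩ := d
  simp only [Module.End.mul_apply, Le, LinearMap.coe_mk, AddHom.coe_mk, fv0, fv1, fv2, fin'_val,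
    LinearMap.zero_apply, Pi.zero_apply]
  split_ifs <;>
      (try simp only [false_and, and_false, true_and, and_true, le_refl, not_true,
        not_false_eq_true] at *) <;>
      first | rfl | omega

lemma R_vzero {i : ℕ} (h : n ≤ i) : Le n i = 0 := by
  refine LinearMap.ext fun f => funext fun d => ?_
  obtain ⟨u, v, l⟩ := d
  have hv := v.isLt
  simp only [Le, LinearMap.coe_mk, AddHom.coe_mk, fv0, fv1, fv2, fin'_val, LinearMap.zero_apply, Pi.zero_apply]
  split_ifs <;>
      (try simp only [false_and, and_false, true_and, and_true, le_refl, not_true,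
        not_false_eq_true] at *) <;>
      first | rfl | omega

lemma R_sum : (Finset.range n).sum (Le n) = 1 := by
  refine LinearMap.ext fun f => funext fun d => ?_
  rw [LinearMap.coe_sum, Finset.sum_apply, Finset.sum_apply]
  simp only [Le, LinearMap.coe_mk, AddHom.coe_mk, fv0, fv1, fv2, fin'_val, Module.End.one_apply]
  rw [Finset.sum_ite_eq (Finset.range n) ((d.2.1 : ℕ)) (fun _ => f d)]
  exact if_pos (Finset.mem_range.mpr d.2.1.isLt)

lemma R_azero {k : ℕ} (h : k = 0 ∨ n ≤ k) : La n k = 0 := by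
  refine LinearMap.ext fun f => funext fun d => ?_
  obtain ⟨u, v, l⟩ := d
  have hv := v.isLt
  simp only [La, LinearMap.coe_mk, AddHom.coe_mk, fv0, fv1, fv2, fin'_val, LinearMap.zero_apply, Pi.zero_apply]
  split_ifs <;>
      (try simp only [false_and, and_false, true_and, and_true, le_refl, not_true,
        not_false_eq_true] at *) <;>
      first | rfl | omega

lemma R_bzero {k : ℕ} (h : k = 0 ∨ n ≤ k) : Lb n k = 0 := by
  refine LinearMap.ext fun f => funext fun d => ?_
  obtain ⟨u, v, l⟩ := d
  have hv := v.isLt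
  simp only [Lb, LinearMap.coe_mk, AddHom.coe_mk, fv0, fv1, fv2, fin'_val, LinearMap.zero_apply, Pi.zero_apply]
  split_ifs <;>
      (try simp only [false_and, and_false, true_and, and_true, le_refl, not_true,
        not_false_eq_true] at *) <;>
      first | rfl | omega

lemma R_a_tgt (k : ℕ) : Le n k * La n k = La n k := by
  refine LinearMap.ext fun f => funext fun d => ?_
  obtain ⟨u, v, l⟩ := d
  simp only [Module.End.mul_apply, Le, La, LinearMap.coe_mk, AddHom.coe_mk, fv0, fv1, fv2, fin'_val]
  split_ifs <;>
      (try simp only [false_and, and_false, true_and, and_true, le_refl, not_true,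
        not_false_eq_true] at *) <;>
      first | rfl | omega

lemma R_a_src (k : ℕ) : La n k * Le n (k - 1) = La n k := by
  refine LinearMap.ext fun f => funext fun d => ?_
  obtain ⟨u, v, l⟩ := d
  have hu := u.isLt
  simp only [Module.End.mul_apply, Le, La, LinearMap.coe_mk, AddHom.coe_mk, fv0, fv1, fv2, fin'_val]
  split_ifs <;>
      (try simp only [false_and, and_false, true_and, and_true, le_refl, not_true,
        not_false_eq_true] at *) <;>
      first | rfl | omega

lemma R_b_tgt (k : ℕ) : Le n (k - 1) * Lb n k = Lb n k := by
  refine LinearMap.ext fun f => funext fun d => ?_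
  obtain ⟨u, v, l⟩ := d
  simp only [Module.End.mul_apply, Le, Lb, LinearMap.coe_mk, AddHom.coe_mk, fv0, fv1, fv2, fin'_val]
  split_ifs <;>
      (try simp only [false_and, and_false, true_and, and_true, le_refl, not_true,
        not_false_eq_true] at *) <;>
      first | rfl | omega

lemma R_b_src (k : ℕ) : Lb n k * Le n k = Lb n k := by
  refine LinearMap.ext fun f => funext fun d => ?_
  obtain ⟨u, v, l⟩ := d
  simp only [Module.End.mul_apply, Le, Lb, LinearMap.coe_mk, AddHom.coe_mk, fv0, fv1, fv2, fin'_val]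
  split_ifs <;>
      (try simp only [false_and, and_false, true_and, and_true, le_refl, not_true,
        not_false_eq_true] at *) <;>
      first | rfl | omega

lemma R_ba_one : Lb n 1 * La n 1 = 0 := by
  refine LinearMap.ext fun f => funext fun d => ?_
  obtain ⟨u, v, l⟩ := d
  simp only [Module.End.mul_apply, La, Lb, LinearMap.coe_mk, AddHom.coe_mk, fv0, fv1, fv2, fin'_val,
    LinearMap.zero_apply, Pi.zero_apply]
  split_ifs <;>
      (try simp only [false_and, and_false, true_and, and_true, le_refl, not_true,
        not_false_eq_true] at *) <;>
      first | rfl | omega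

lemma R_loops {k : ℕ} (h : 1 ≤ k) (h' : k ≤ n - 2) :
    La n k * Lb n k = Lb n (k + 1) * La n (k + 1) := by
  have hn : k + 1 < n := by omega
  refine LinearMap.ext fun f => funext fun d => ?_
  obtain ⟨u, v, l⟩ := d
  have hu := u.isLt
  simp only [Module.End.mul_apply, La, Lb, LinearMap.coe_mk, AddHom.coe_mk, fv0, fv1, fv2, fin'_val]
  split_ifs <;>
      (try simp only [false_and, and_false, true_and, and_true, le_refl, not_true,
        not_false_eq_true] at *) <;>
      first | rfl | omega

lemma R_aa (k : ℕ) : La n (k + 1) * La n k = 0 := by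
  refine LinearMap.ext fun f => funext fun d => ?_
  obtain ⟨u, v, l⟩ := d
  simp only [Module.End.mul_apply, La, LinearMap.coe_mk, AddHom.coe_mk, fv0, fv1, fv2, fin'_val,
    LinearMap.zero_apply, Pi.zero_apply]
  split_ifs <;>
      (try simp only [false_and, and_false, true_and, and_true, le_refl, not_true,
        not_false_eq_true] at *) <;>
      first | rfl | omega

lemma R_bb (k : ℕ) : Lb n k * Lb n (k + 1) = 0 := by
  refine LinearMap.ext fun f => funext fun d => ?_
  obtain ⟨u, v, l⟩ := d
  simp only [Module.End.mul_apply, Lb, LinearMap.coe_mk, AddHom.coe_mk, fv0, fv1, fv2, fin'_val,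
    LinearMap.zero_apply, Pi.zero_apply]
  split_ifs <;>
      (try simp only [false_and, and_false, true_and, and_true, le_refl, not_true,
        not_false_eq_true] at *) <;>
      first | rfl | omega

/-- generators of the model representation -/
noncomputable def Fg : Gen → Module.End ℂ (Vm n)
  | Sum.inl i => Le n i
  | Sum.inr (Sum.inl k) => La n k
  | Sum.inr (Sum.inr k) => Lb n k

noncomputable def Fmap : FreeAlgebra ℂ Gen →ₐ[ℂ] Module.End ℂ (Vm n) :=
  FreeAlgebra.lift ℂ (Fg n)

lemma Fmap_vg (i : ℕ) : Fmap n (vg i) = Le n i := by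
  rw [vg, Fmap, FreeAlgebra.lift_ι_apply]; rfl

lemma Fmap_ag (i : ℕ) : Fmap n (ag i) = La n i := by
  rw [ag, Fmap, FreeAlgebra.lift_ι_apply]; rfl

lemma Fmap_bg (i : ℕ) : Fmap n (bg i) = Lb n i := by
  rw [bg, Fmap, FreeAlgebra.lift_ι_apply]; rfl

lemma relFmap : ∀ ⦃p q⦄, Rel n p q → Fmap n p = Fmap n q := by
  intro p q h
  induction h with
  | idem i => rw [map_mul, Fmap_vg, R_idem]
  | orth i j h => rw [map_mul, map_zero, Fmap_vg, Fmap_vg, R_orth n h]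
  | vzero i h => rw [map_zero, Fmap_vg, R_vzero n h]
  | sum_one =>
      rw [map_sum, map_one]
      simp only [Fmap_vg]
      exact R_sum n
  | azero i h => rw [map_zero, Fmap_ag, R_azero n h]
  | bzero i h => rw [map_zero, Fmap_bg, R_bzero n h]
  | a_tgt i => rw [map_mul, Fmap_vg, Fmap_ag, R_a_tgt]
  | a_src i => rw [map_mul, Fmap_vg, Fmap_ag, R_a_src]
  | b_tgt i => rw [map_mul, Fmap_vg, Fmap_bg, R_b_tgt]
  | b_src i => rw [map_mul, Fmap_vg, Fmap_bg, R_b_src]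
  | ba_one => rw [map_mul, map_zero, Fmap_ag, Fmap_bg, R_ba_one]
  | loops i h h' =>
      rw [map_mul, map_mul, Fmap_ag, Fmap_bg, Fmap_ag, Fmap_bg, R_loops n h h']
  | aa i => rw [map_mul, map_zero, Fmap_ag, Fmap_ag, R_aa]
  | bb i => rw [map_mul, map_zero, Fmap_bg, Fmap_bg, R_bb]

/-- the model representation of `A_n^𝔭`. -/
noncomputable def rho : An n →ₐ[ℂ] Module.End ℂ (Vm n) :=
  RingQuot.liftAlgHom ℂ ⟨Fmap n, relFmap n⟩

lemma rho_toAn (w : FreeAlgebra ℂ Gen) : rho n (toAn n w) = Fmap n w :=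
  RingQuot.liftAlgHom_mkAlgHom_apply ℂ (Fmap n) (relFmap n) w

lemma rho_e (i : ℕ) : rho n (e n i) = Le n i := by
  rw [e, rho_toAn, Fmap_vg]

lemma rho_a (i : ℕ) : rho n (a n i) = La n i := by
  rw [a, rho_toAn, Fmap_ag]

lemma rho_b (i : ℕ) : rho n (b n i) = Lb n i := by
  rw [b, rho_toAn, Fmap_bg]

lemma rho_x (i : ℕ) : rho n (x n i) = La n i * Lb n i := by
  rw [x_def, map_mul, rho_a, rho_b]

end Model

end SlnQ
namespace SlnQ

section BasisSec

variable (n : ℕ)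

/-- Index type for the basis of `A_n^𝔭`: vertices, `a`-arrows, `b`-arrows, loops. -/
abbrev Idx (n : ℕ) : Type := Fin n ⊕ (Fin (n-1) ⊕ (Fin (n-1) ⊕ Fin (n-1)))

/-- inclusion `Fin (n-1) → Fin n`, `k ↦ k` -/
def fl {n : ℕ} (k : Fin (n-1)) : Fin n := ⟨k, by have := k.isLt; omega⟩
/-- inclusion `Fin (n-1) → Fin n`, `k ↦ k+1` -/
def fr {n : ℕ} (k : Fin (n-1)) : Fin n := ⟨(k : ℕ) + 1, by have := k.isLt; omega⟩

@[simp] lemma fl_val {n : ℕ} (k : Fin (n-1)) : ((fl k : Fin n) : ℕ) = k := rfl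
@[simp] lemma fr_val {n : ℕ} (k : Fin (n-1)) : ((fr k : Fin n) : ℕ) = (k : ℕ) + 1 := rfl

/-- The spanning family of `A_n^𝔭`. -/
noncomputable def bas : Idx n → An n
  | .inl i => e n i
  | .inr (.inl k) => a n ((k : ℕ) + 1)
  | .inr (.inr (.inl k)) => b n ((k : ℕ) + 1)
  | .inr (.inr (.inr k)) => x n ((k : ℕ) + 1)

/-- input point for the dual pairing -/
def din : Idx n → Fin n × Fin n × Fin 3
  | .inl i => (i, i, 0)
  | .inr (.inl k) => (fl k, fl k, 0)
  | .inr (.inr (.inl k)) => (fr k, fr k, 0)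
  | .inr (.inr (.inr k)) => (fr k, fr k, 0)

/-- output point for the dual pairing -/
def dout : Idx n → Fin n × Fin n × Fin 3
  | .inl i => (i, i, 0)
  | .inr (.inl k) => (fl k, fr k, 1)
  | .inr (.inr (.inl k)) => (fr k, fl k, 1)
  | .inr (.inr (.inr k)) => (fr k, fr k, 2)

lemma pairing (p q : Idx n) :
    (rho n (bas n p)) (Pi.single (din n q) (1 : ℂ)) (dout n q) = if p = q then 1 else 0 := by
  rcases p with i | k | k | k <;> rcases q with i' | k' | k' | k' <;>
    simp only [bas, din, dout, rho_e, rho_a, rho_b, rho_x, Le, La, Lb, Module.End.mul_apply,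
      LinearMap.coe_mk, AddHom.coe_mk, fv0, fv1, fv2, fin'_val, fl_val, fr_val,
      Pi.single_apply, Prod.mk.injEq, Fin.ext_iff, Sum.inl.injEq, Sum.inr.injEq,
      reduceCtorEq, if_false] <;>
    split_ifs <;>
      (try simp only [false_and, and_false, true_and, and_true, le_refl, not_true,
        not_false_eq_true] at *) <;>
      first | rfl | omega

lemma bas_indep : LinearIndependent ℂ (bas n) := by
  apply LinearIndependent.of_comp (rho n).toLinearMap
  rw [Fintype.linearIndependent_iff]
  intro g hg p
  have h2 := congrFun (LinearMap.congr_fun hg (Pi.single (din n p) (1 : ℂ))) (dout n p)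
  simp only [Function.comp_apply, AlgHom.toLinearMap_apply, LinearMap.coe_sum,
    Finset.sum_apply, LinearMap.smul_apply, Pi.smul_apply, smul_eq_mul,
    LinearMap.zero_apply, Pi.zero_apply] at h2
  rw [Finset.sum_congr rfl (fun q _ => by rw [pairing n q p])] at h2
  simpa using h2

lemma one_mem_span : (1 : An n) ∈ Submodule.span ℂ (Set.range (bas n)) := by
  rw [one_eq_sum]
  apply Submodule.sum_mem
  intro i hi
  have hi' := Finset.mem_range.mp hi
  exact Submodule.subset_span ⟨.inl ⟨i, hi'⟩, rfl⟩

lemma bas_mul_bas (p q : Idx n) :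
    bas n p * bas n q ∈ Submodule.span ℂ (Set.range (bas n)) := by
  have mem : ∀ r : Idx n, bas n r ∈ Submodule.span ℂ (Set.range (bas n)) := fun r =>
    Submodule.subset_span ⟨r, rfl⟩
  have z0 : (0 : An n) ∈ Submodule.span ℂ (Set.range (bas n)) := Submodule.zero_mem _
  rcases p with i | k | k | k <;> rcases q with i' | k' | k' | k' <;> simp only [bas]
  · rw [eE]; split_ifs; exacts [mem (.inl i), z0]
  · rw [eA]; split_ifs; exacts [mem (.inr (.inl k')), z0]
  · rw [eB]; split_ifs; exacts [mem (.inr (.inr (.inl k'))), z0]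
  · rw [eX]; split_ifs; exacts [mem (.inr (.inr (.inr k'))), z0]
  · rw [aE]; split_ifs; exacts [mem (.inr (.inl k)), z0]
  · rw [aA]; exact z0
  · rw [aB]; split_ifs with h
    · exact mem (.inr (.inr (.inr k)))
    · exact z0
  · rw [aX]; exact z0
  · rw [bE]; split_ifs; exacts [mem (.inr (.inr (.inl k))), z0]
  · rw [bA]; split_ifs with h
    · obtain ⟨h1, h2, h3⟩ := h
      have hk : (k : ℕ) + 1 - 1 = (k : ℕ) := by omega
      rw [hk]
      have hk2 : (k : ℕ) - 1 < n - 1 := by have := k.isLt; omega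
      have : (k : ℕ) = ((⟨(k : ℕ) - 1, hk2⟩ : Fin (n-1)) : ℕ) + 1 := by
        simp only [Fin.val_mk]; omega
      rw [this]
      exact mem (.inr (.inr (.inr ⟨(k : ℕ) - 1, hk2⟩)))
    · exact z0
  · rw [bB]; exact z0
  · rw [bX]; exact z0
  · rw [xE]; split_ifs; exacts [mem (.inr (.inr (.inr k))), z0]
  · rw [xA]; exact z0
  · rw [xB]; exact z0
  · rw [xX]; exact z0

lemma bas_span : Submodule.span ℂ (Set.range (bas n)) = ⊤ := by
  rw [Submodule.eq_top_iff']
  intro z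
  obtain ⟨w, rfl⟩ := RingQuot.mkAlgHom_surjective ℂ (Rel n) z
  show toAn n w ∈ _
  induction w using FreeAlgebra.induction with
  | grade0 r =>
      rw [AlgHom.commutes, Algebra.algebraMap_eq_smul_one]
      exact Submodule.smul_mem _ r (one_mem_span n)
  | grade1 g =>
      rcases g with i | k | k
      · show e n i ∈ _
        by_cases hi : i < n
        · exact Submodule.subset_span ⟨.inl ⟨i, hi⟩, rfl⟩
        · rw [e_zero n (by omega)]; exact Submodule.zero_mem _
      · show a n k ∈ _
        by_cases hk : 1 ≤ k ∧ k ≤ n - 1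
        · have hk2 : k - 1 < n - 1 := by omega
          have : k = ((⟨k - 1, hk2⟩ : Fin (n-1)) : ℕ) + 1 := by simp only [Fin.val_mk]; omega
          rw [this]
          exact Submodule.subset_span ⟨.inr (.inl ⟨k - 1, hk2⟩), rfl⟩
        · rw [a_zero n (by omega)]; exact Submodule.zero_mem _
      · show b n k ∈ _
        by_cases hk : 1 ≤ k ∧ k ≤ n - 1
        · have hk2 : k - 1 < n - 1 := by omega
          have : k = ((⟨k - 1, hk2⟩ : Fin (n-1)) : ℕ) + 1 := by simp only [Fin.val_mk]; omega
          rw [this]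
          exact Submodule.subset_span ⟨.inr (.inr (.inl ⟨k - 1, hk2⟩)), rfl⟩
        · rw [b_zero n (by omega)]; exact Submodule.zero_mem _
  | mul w1 w2 ih1 ih2 =>
      rw [map_mul]
      have h1 := Submodule.mul_mem_mul ih1 ih2
      rw [Submodule.span_mul_span] at h1
      refine Submodule.span_le.mpr ?_ h1
      rw [Set.mul_subset_iff]
      rintro _ ⟨p, rfl⟩ _ ⟨q, rfl⟩
      exact bas_mul_bas n p q
  | add w1 w2 ih1 ih2 =>
      rw [map_add]; exact Submodule.add_mem _ ih1 ih2

/-- The basis of `A_n^𝔭`. -/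
noncomputable def basAn : Module.Basis (Idx n) ℂ (An n) :=
  Module.Basis.mk (bas_indep n) (by rw [bas_span])

lemma finrank_An : Module.finrank ℂ (An n) = 4 * n - 3 := by
  have h := Module.finrank_eq_card_basis (basAn n)
  rw [h]
  simp only [Fintype.card_sum, Fintype.card_fin]
  omega

end BasisSec

end SlnQ
namespace SlnQ

section Hom

variable (n : ℕ)

lemma memP_fix {i : ℕ} {z : An n} (hz : z ∈ P n i) : e n i * z = z := by
  obtain ⟨r, rfl⟩ := Submodule.mem_span_singleton.mp hz
  rw [MulOpposite.smul_eq_mul_unop, ← mul_assoc, e_idem]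

/-- Evaluation of a module homomorphism `P(σ_j) → P(σ_i)` at `1_{σ_j}`. -/
noncomputable def Phi (i j : ℕ) :
    (↥(P n j) →ₗ[(An n)ᵐᵒᵖ] ↥(P n i)) →ₗ[ℂ] An n where
  toFun f := (f ⟨e n j, mem_P (e_idem n j)⟩ : An n)
  map_add' f g := rfl
  map_smul' c f := rfl

lemma Phi_lmul (i j : ℕ) {z : An n} (h : e n i * z = z) :
    Phi n i j (lmul n j h) = z * e n j := rfl

lemma Phi_fix_left (i j : ℕ) (f : ↥(P n j) →ₗ[(An n)ᵐᵒᵖ] ↥(P n i)) :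
    e n i * Phi n i j f = Phi n i j f :=
  memP_fix n (f _).2

lemma Phi_fix_right (i j : ℕ) (f : ↥(P n j) →ₗ[(An n)ᵐᵒᵖ] ↥(P n i)) :
    Phi n i j f * e n j = Phi n i j f := by
  have hv : (⟨e n j, mem_P (e_idem n j)⟩ : ↥(P n j))
      = op (e n j) • ⟨e n j, mem_P (e_idem n j)⟩ := by
    apply Subtype.ext
    show e n j = op (e n j) • e n j
    rw [op_smul_eq_mul, e_idem]
  show (f _ : An n) * e n j = (f _ : An n)
  conv_rhs => rw [hv]
  rw [map_smul]
  show _ = ((op (e n j) • (f _ : An n)))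
  rw [op_smul_eq_mul]

lemma Phi_inj (i j : ℕ) : Function.Injective (Phi n i j) := by
  intro f g h
  apply LinearMap.ext
  rintro ⟨z, hz⟩
  obtain ⟨r, rfl⟩ := Submodule.mem_span_singleton.mp hz
  have h0 : f ⟨e n j, mem_P (e_idem n j)⟩ = g ⟨e n j, mem_P (e_idem n j)⟩ :=
    Subtype.ext h
  have hv : (⟨r • e n j, hz⟩ : ↥(P n j)) = r • ⟨e n j, mem_P (e_idem n j)⟩ := rfl
  rw [hv, map_smul, map_smul, h0]

/-- target vertex of a basis path -/
def tgt : Idx n → ℕ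
  | .inl i => i
  | .inr (.inl k) => (k : ℕ) + 1
  | .inr (.inr (.inl k)) => (k : ℕ)
  | .inr (.inr (.inr k)) => (k : ℕ) + 1

/-- source vertex of a basis path -/
def src : Idx n → ℕ
  | .inl i => i
  | .inr (.inl k) => (k : ℕ)
  | .inr (.inr (.inl k)) => (k : ℕ) + 1
  | .inr (.inr (.inr k)) => (k : ℕ) + 1

lemma e_mul_bas (i : ℕ) (p : Idx n) :
    e n i * bas n p = if tgt n p = i then bas n p else 0 := by
  rcases p with i' | k | k | k <;> simp only [bas, tgt]
  · rw [eE]; split_ifs <;> simp_all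
  · rw [eA]; split_ifs <;> simp_all
  · rw [eB, Nat.add_sub_cancel]; split_ifs <;> simp_all
  · rw [eX]; split_ifs <;> simp_all

lemma bas_mul_e (p : Idx n) (j : ℕ) :
    bas n p * e n j = if src n p = j then bas n p else 0 := by
  rcases p with i' | k | k | k <;> simp only [bas, src]
  · rw [eE]; rfl
  · rw [aE, Nat.add_sub_cancel]; rfl
  · rw [bE]; rfl
  · rw [xE]; rfl

lemma eBasE (i j : ℕ) (p : Idx n) :
    e n i * bas n p * e n j = if tgt n p = i ∧ src n p = j then bas n p else 0 := by
  rw [e_mul_bas]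
  split_ifs with h1 h2 h3
  · rw [bas_mul_e, if_pos h2.2]
  · rw [bas_mul_e, if_neg (fun hc => h2 ⟨h1, hc⟩)]
  · exact absurd h3.1 h1
  · rw [zero_mul]

lemma range_Phi_le (i j : ℕ) (S : Submodule ℂ (An n))
    (hS : ∀ p : Idx n, e n i * bas n p * e n j ∈ S) :
    LinearMap.range (Phi n i j) ≤ S := by
  rintro _ ⟨f, rfl⟩
  have h1 := Phi_fix_left n i j f
  have h2 := Phi_fix_right n i j f
  set z := Phi n i j f with hz
  have hcoe : ∀ p : Idx n, (basAn n) p = bas n p := fun p =>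
    congrFun (Module.Basis.coe_mk (bas_indep n) _) p
  have hrepr : z = (Finset.univ : Finset (Idx n)).sum
      (fun p => (basAn n).repr z p • bas n p) := by
    conv_lhs => rw [← Module.Basis.sum_repr (basAn n) z]
    exact Finset.sum_congr rfl (fun p _ => by rw [hcoe p])
  have key : z = (Finset.univ : Finset (Idx n)).sum
      (fun p => (basAn n).repr z p • (e n i * bas n p * e n j)) := by
    calc z = e n i * z * e n j := by rw [h1, h2]
      _ = _ := by
          conv_lhs => rw [hrepr]
          rw [Finset.mul_sum, Finset.sum_mul]
          apply Finset.sum_congr rfl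
          intro p _
          rw [mul_smul_comm, smul_mul_assoc]
  rw [key]
  exact Submodule.sum_mem _ (fun p _ => Submodule.smul_mem _ _ (hS p))

end Hom

end SlnQ
namespace SlnQ

section Final

variable (n : ℕ)

lemma finrank_hom_eq (i j : ℕ) :
    Module.finrank ℂ (↥(P n j) →ₗ[(An n)ᵐᵒᵖ] ↥(P n i))
      = Module.finrank ℂ (LinearMap.range (Phi n i j)) :=
  LinearEquiv.finrank_eq (LinearEquiv.ofInjective (Phi n i j) (Phi_inj n i j))

lemma finrank_hom_diag (hn : 2 ≤ n) (i : ℕ) (h1 : 1 ≤ i) (h2 : i ≤ n - 1) :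
    Module.finrank ℂ (↥(P n i) →ₗ[(An n)ᵐᵒᵖ] ↥(P n i)) = 2 := by
  have hfam : bas n ∘ ![Sum.inl ⟨i, by omega⟩,
      Sum.inr (Sum.inr (Sum.inr ⟨i - 1, by omega⟩))] = ![e n i, x n i] := by
    funext t
    fin_cases t <;> simp only [Function.comp_apply, Matrix.cons_val_zero, Matrix.cons_val_one,
      Matrix.head_cons, bas]
    · rfl
    · show x n (i - 1 + 1) = x n i
      rw [show i - 1 + 1 = i by omega]
  have ginj : Function.Injective (![Sum.inl ⟨i, by omega⟩,
      Sum.inr (Sum.inr (Sum.inr ⟨i - 1, by omega⟩))] : Fin 2 → Idx n) := by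
    intro s t hst
    fin_cases s <;> fin_cases t <;> simp_all
  have li : LinearIndependent ℂ ![e n i, x n i] := by
    rw [← hfam]
    exact (bas_indep n).comp _ ginj
  have hrange : LinearMap.range (Phi n i i)
      = Submodule.span ℂ (Set.range ![e n i, x n i]) := by
    apply le_antisymm
    · apply range_Phi_le
      intro p
      rw [eBasE]
      split_ifs with h
      · rcases p with i' | k | k | k <;> simp only [tgt, src] at h
        · apply Submodule.subset_span
          refine ⟨0, ?_⟩
          show e n i = bas n (Sum.inl i')
          show e n i = e n (i' : ℕ)
          rw [h.1]
        · exact absurd h (by omega)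
        · exact absurd h (by omega)
        · apply Submodule.subset_span
          refine ⟨1, ?_⟩
          show x n i = bas n _
          show x n i = x n ((k : ℕ) + 1)
          rw [h.1]
      · exact Submodule.zero_mem _
    · rw [Submodule.span_le]
      rintro z ⟨t, rfl⟩
      fin_cases t
      · refine ⟨lmul n i (e_idem n i), ?_⟩
        show e n i * e n i = _
        rw [e_idem]; rfl
      · refine ⟨lmul n i (e_mul_x n i), ?_⟩
        show x n i * e n i = _
        rw [xE, if_pos rfl]; rfl
  rw [finrank_hom_eq, hrange, finrank_span_eq_card li]
  simp

lemma finrank_hom_zero (hn : 2 ≤ n) :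
    Module.finrank ℂ (↥(P n 0) →ₗ[(An n)ᵐᵒᵖ] ↥(P n 0)) = 1 := by
  have hfam : bas n ∘ ![Sum.inl ⟨0, by omega⟩] = ![e n 0] := by
    funext t; fin_cases t; rfl
  have ginj : Function.Injective (![Sum.inl ⟨0, by omega⟩] : Fin 1 → Idx n) := by
    intro s t hst; fin_cases s <;> fin_cases t <;> simp_all
  have li : LinearIndependent ℂ ![e n 0] := by
    rw [← hfam]; exact (bas_indep n).comp _ ginj
  have hrange : LinearMap.range (Phi n 0 0)
      = Submodule.span ℂ (Set.range ![e n 0]) := by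
    apply le_antisymm
    · apply range_Phi_le
      intro p
      rw [eBasE]
      split_ifs with h
      · rcases p with i' | k | k | k <;> simp only [tgt, src] at h
        · apply Submodule.subset_span
          refine ⟨0, ?_⟩
          show e n 0 = e n (i' : ℕ)
          rw [h.1]
        · exact absurd h (by omega)
        · exact absurd h (by omega)
        · exact absurd h (by omega)
      · exact Submodule.zero_mem _
    · rw [Submodule.span_le]
      rintro z ⟨t, rfl⟩
      fin_cases t
      refine ⟨lmul n 0 (e_idem n 0), ?_⟩
      show e n 0 * e n 0 = _
      rw [e_idem]; rfl
  rw [finrank_hom_eq, hrange, finrank_span_eq_card li]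
  simp

lemma finrank_hom_adj (hn : 2 ≤ n) (i j : ℕ) (hi : i ≤ n - 1) (hj : j ≤ n - 1)
    (h : ((i : ℤ) - (j : ℤ)).natAbs = 1) :
    Module.finrank ℂ (↥(P n j) →ₗ[(An n)ᵐᵒᵖ] ↥(P n i)) = 1 := by
  rcases (by omega : i = j + 1 ∨ j = i + 1) with hij | hij
  · -- arrow a_i : σ_j → σ_i
    subst hij
    have hfam : bas n ∘ ![Sum.inr (Sum.inl ⟨j, by omega⟩)] = ![a n (j + 1)] := by
      funext t; fin_cases t; rfl
    have ginj : Function.Injective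
        (![Sum.inr (Sum.inl ⟨j, by omega⟩)] : Fin 1 → Idx n) := by
      intro s t hst; fin_cases s <;> fin_cases t <;> simp_all
    have li : LinearIndependent ℂ ![a n (j + 1)] := by
      rw [← hfam]; exact (bas_indep n).comp _ ginj
    have hrange : LinearMap.range (Phi n (j + 1) j)
        = Submodule.span ℂ (Set.range ![a n (j + 1)]) := by
      apply le_antisymm
      · apply range_Phi_le
        intro p
        rw [eBasE]
        split_ifs with h
        · rcases p with i' | k | k | k <;> simp only [tgt, src] at h
          · exact absurd h (by omega)
          · apply Submodule.subset_span
            refine ⟨0, ?_⟩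
            show a n (j + 1) = a n ((k : ℕ) + 1)
            rw [show (k : ℕ) = j from h.2]
          · exact absurd h (by omega)
          · exact absurd h (by omega)
        · exact Submodule.zero_mem _
      · rw [Submodule.span_le]
        rintro z ⟨t, rfl⟩
        fin_cases t
        refine ⟨lmul n j (e_mul_a n (j + 1)), ?_⟩
        show a n (j + 1) * e n j = _
        rw [aE, if_pos (by omega)]; rfl
    rw [finrank_hom_eq, hrange, finrank_span_eq_card li]
    simp
  · -- arrow b_j : σ_j → σ_i
    subst hij
    have hfam : bas n ∘ ![Sum.inr (Sum.inr (Sum.inl ⟨i, by omega⟩))] = ![b n (i + 1)] := by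
      funext t; fin_cases t; rfl
    have ginj : Function.Injective
        (![Sum.inr (Sum.inr (Sum.inl ⟨i, by omega⟩))] : Fin 1 → Idx n) := by
      intro s t hst; fin_cases s <;> fin_cases t <;> simp_all
    have li : LinearIndependent ℂ ![b n (i + 1)] := by
      rw [← hfam]; exact (bas_indep n).comp _ ginj
    have hrange : LinearMap.range (Phi n i (i + 1))
        = Submodule.span ℂ (Set.range ![b n (i + 1)]) := by
      apply le_antisymm
      · apply range_Phi_le
        intro p
        rw [eBasE]
        split_ifs with h
        · rcases p with i' | k | k | k <;> simp only [tgt, src] at h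
          · exact absurd h (by omega)
          · exact absurd h (by omega)
          · apply Submodule.subset_span
            refine ⟨0, ?_⟩
            show b n (i + 1) = b n ((k : ℕ) + 1)
            rw [show (k : ℕ) = i from h.1]
          · exact absurd h (by omega)
        · exact Submodule.zero_mem _
      · rw [Submodule.span_le]
        rintro z ⟨t, rfl⟩
        fin_cases t
        have hb : e n i * b n (i + 1) = b n (i + 1) := by
          have := e_mul_b n (i + 1)
          rwa [Nat.add_sub_cancel] at this
        refine ⟨lmul n (i + 1) hb, ?_⟩
        show b n (i + 1) * e n (i + 1) = _
        rw [bE, if_pos rfl]; rfl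
    rw [finrank_hom_eq, hrange, finrank_span_eq_card li]
    simp

lemma finrank_hom_far (hn : 2 ≤ n) (i j : ℕ) (hi : i ≤ n - 1) (hj : j ≤ n - 1)
    (h : 2 ≤ ((i : ℤ) - (j : ℤ)).natAbs) :
    Module.finrank ℂ (↥(P n j) →ₗ[(An n)ᵐᵒᵖ] ↥(P n i)) = 0 := by
  have hrange : LinearMap.range (Phi n i j) = ⊥ := by
    rw [← le_bot_iff]
    apply range_Phi_le
    intro p
    rw [eBasE]
    split_ifs with hc
    · rcases p with i' | k | k | k <;> simp only [tgt, src] at hc <;>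
        exact absurd hc (by omega)
    · exact Submodule.zero_mem _
  rw [finrank_hom_eq, hrange, finrank_bot]

end Final

end SlnQ

namespace SlnQ

/-- For `n ≥ 2` and `0 ≤ i, j ≤ n-1`, the dimension of
`Hom_{A_n^𝔭}(P(σ_j), P(σ_i))` is `2` if `i = j ≥ 1`, `1` if `i = j = 0`, `1` if
`|i - j| = 1`, and `0` if `|i - j| ≥ 2`; consequently `dim_ℂ A_n^𝔭 = 4n - 3`. -/
theorem hom_dims_and_dim_An (n : ℕ) (hn : 2 ≤ n) :
    (∀ i : ℕ, 1 ≤ i → i ≤ n - 1 →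
      Module.finrank ℂ (↥(P n i) →ₗ[(An n)ᵐᵒᵖ] ↥(P n i)) = 2) ∧
    Module.finrank ℂ (↥(P n 0) →ₗ[(An n)ᵐᵒᵖ] ↥(P n 0)) = 1 ∧
    (∀ i j : ℕ, i ≤ n - 1 → j ≤ n - 1 → ((i : ℤ) - (j : ℤ)).natAbs = 1 →
      Module.finrank ℂ (↥(P n j) →ₗ[(An n)ᵐᵒᵖ] ↥(P n i)) = 1) ∧
    (∀ i j : ℕ, i ≤ n - 1 → j ≤ n - 1 → 2 ≤ ((i : ℤ) - (j : ℤ)).natAbs →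
      Module.finrank ℂ (↥(P n j) →ₗ[(An n)ᵐᵒᵖ] ↥(P n i)) = 0) ∧
    Module.finrank ℂ (An n) = 4 * n - 3 := by
  exact ⟨fun i h1 h2 => finrank_hom_diag n hn i h1 h2, finrank_hom_zero n hn,
    fun i j hi hj h => finrank_hom_adj n hn i j hi hj h,
    fun i j hi hj h => finrank_hom_far n hn i j hi hj h, finrank_An n⟩

end SlnQ
end
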